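/- arXiv:2510.04432 — 3 statements merged into one kernel-verified Lean document; each statement's English description precedes it below -/
import Mathlib

section
/- Let d ≥ 1, let 𝓗 be a finite nonempty index set, and for each k ∈ 𝓗 let ℓ_k : ℝ^d → ℝ be L-smooth for some L > 0. Set ℓ_𝓗 = (1/|𝓗|)∑_{k∈𝓗} ℓ_k and assume the heterogeneity bound (1/|𝓗|)∑_{k∈𝓗}‖∇ℓ_k(w') − ∇ℓ_𝓗(w')‖² ≤ G² for all w' ∈ ℝ^d. Let γ > 0 and H ≥ 1 satisfy L²γ²H(H−1) ≤ 1/2, fix w ∈ ℝ^d, and for each k ∈ 𝓗 define v_{k,0} = w and v_{k,h+1} = v_{k,h} − γ∇ℓ_k(v_{k,h}) for 0 ≤ h < H. Then ∑_{k∈𝓗} ∑_{h=0}^{H−1}‖v_{k,h} − w‖² ≤ 4γ²|𝓗|H²(H−1)(G² + ‖∇ℓ_𝓗(w)‖²). -/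
open Finset

set_option maxHeartbeats 2000000 in
/-- Lemma (total drift of local gradient descent over heterogeneous clients):
if each `ℓ_k` is `L`-smooth, the heterogeneity bound holds, `L²γ²H(H-1) ≤ 1/2`,
and each client runs `v_{k,0} = w`, `v_{k,h+1} = v_{k,h} - γ∇ℓ_k(v_{k,h})`, then
`∑_k ∑_{h<H} ‖v_{k,h} - w‖² ≤ 4γ²|𝓗|H²(H-1)(G² + ‖∇ℓ_𝓗(w)‖²)`. -/
theorem stmt_14 (d : ℕ) (hd : 1 ≤ d) (ι : Type) [Fintype ι] [Nonempty ι]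
    (ℓ : ι → EuclideanSpace ℝ (Fin d) → ℝ) (L G : ℝ) (hL : 0 < L)
    (lH : EuclideanSpace ℝ (Fin d) → ℝ)
    (hlH : lH = fun w => (Fintype.card ι : ℝ)⁻¹ * ∑ k, ℓ k w)
    (hdiff : ∀ k, Differentiable ℝ (ℓ k))
    (hsmooth : ∀ (k : ι) (w w' : EuclideanSpace ℝ (Fin d)),
      ‖gradient (ℓ k) w' - gradient (ℓ k) w‖ ≤ L * ‖w' - w‖)
    (hhetero : ∀ w' : EuclideanSpace ℝ (Fin d),
      (Fintype.card ι : ℝ)⁻¹ * ∑ k, ‖gradient (ℓ k) w' - gradient lH w'‖ ^ 2 ≤ G ^ 2)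
    (γ : ℝ) (hγ : 0 < γ) (H : ℕ) (hH : 1 ≤ H)
    (hstep : L ^ 2 * γ ^ 2 * (H : ℝ) * ((H : ℝ) - 1) ≤ 1 / 2)
    (w : EuclideanSpace ℝ (Fin d)) (v : ι → ℕ → EuclideanSpace ℝ (Fin d))
    (hv0 : ∀ k, v k 0 = w)
    (hrec : ∀ (k : ι) (h : ℕ), v k (h + 1) = v k h - γ • gradient (ℓ k) (v k h)) :
    ∑ k, ∑ h ∈ Finset.range H, ‖v k h - w‖ ^ 2
      ≤ 4 * γ ^ 2 * (Fintype.card ι : ℝ) * (H : ℝ) ^ 2 * ((H : ℝ) - 1)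
          * (G ^ 2 + ‖gradient lH w‖ ^ 2) := by
  have hid : ∀ n : ℕ, ∑ h ∈ range n, (h : ℝ) = (n : ℝ) * ((n : ℝ) - 1) / 2 := by
    intro n
    induction n with
    | zero => simp
    | succ m ih => rw [Finset.sum_range_succ, ih]; push_cast; ring
  set N : ℝ := (Fintype.card ι : ℝ) with hN
  have hNpos : 0 < N := by rw [hN]; exact_mod_cast Fintype.card_pos
  set g : ℝ := ‖gradient lH w‖ ^ 2 with hg
  have hhet : ∑ k, ‖gradient (ℓ k) w - gradient lH w‖ ^ 2 ≤ N * G ^ 2 := by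
    have h1 := hhetero w
    rw [inv_mul_le_iff₀ hNpos] at h1
    linarith
  have hclosed : ∀ k h, w - v k h = γ • ∑ j ∈ range h, gradient (ℓ k) (v k j) := by
    intro k h
    induction h with
    | zero => simp [hv0 k]
    | succ h ih =>
        rw [hrec, Finset.sum_range_succ, smul_add, ← ih]
        abel
  have hgrad : ∀ k j, ‖gradient (ℓ k) (v k j)‖ ^ 2
      ≤ 2 * L ^ 2 * ‖v k j - w‖ ^ 2
        + 4 * ‖gradient (ℓ k) w - gradient lH w‖ ^ 2 + 4 * g := by
    intro k j
    set a := gradient (ℓ k) (v k j) with ha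
    set b := gradient (ℓ k) w with hb
    set c := gradient lH w with hc
    have h1 : ‖a‖ ≤ ‖a - b‖ + ‖b - c‖ + ‖c‖ := by
      have e : a = (a - b) + (b - c) + c := by abel
      calc ‖a‖ = ‖(a - b) + (b - c) + c‖ := by rw [← e]
        _ ≤ ‖(a - b) + (b - c)‖ + ‖c‖ := norm_add_le _ _
        _ ≤ ‖a - b‖ + ‖b - c‖ + ‖c‖ := by gcongr; exact norm_add_le _ _
    have h2 : ‖a - b‖ ≤ L * ‖v k j - w‖ := hsmooth k w (v k j)
    have h1sq : ‖a‖ ^ 2 ≤ (‖a - b‖ + ‖b - c‖ + ‖c‖) ^ 2 := by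
      have := norm_nonneg a
      nlinarith [norm_nonneg (a - b), norm_nonneg (b - c), norm_nonneg c]
    have h2sq : ‖a - b‖ ^ 2 ≤ L ^ 2 * ‖v k j - w‖ ^ 2 := by
      nlinarith [norm_nonneg (a - b), norm_nonneg (v k j - w)]
    have hgc : g = ‖c‖ ^ 2 := by rw [hg, hc]
    rw [hgc]
    nlinarith [sq_nonneg (‖a - b‖ - ‖b - c‖ - ‖c‖), sq_nonneg (‖b - c‖ - ‖c‖)]
  set D : ℕ → ℝ := fun h => ∑ k, ‖v k h - w‖ ^ 2 with hD
  have hDnonneg : ∀ h, 0 ≤ D h := fun h => Finset.sum_nonneg fun k _ => sq_nonneg _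
  set S : ℝ := ∑ h ∈ range H, D h with hS
  have hSnonneg : 0 ≤ S := Finset.sum_nonneg fun h _ => hDnonneg h
  have hGg : 0 ≤ G ^ 2 + g := by positivity
  have hDbound : ∀ h, D h ≤ 2 * L ^ 2 * γ ^ 2 * h * ∑ j ∈ range h, D j
      + 4 * γ ^ 2 * (h : ℝ) ^ 2 * N * (G ^ 2 + g) := by
    intro h
    have step1 : D h ≤ γ ^ 2 * ∑ k, (h : ℝ) * ∑ j ∈ range h, ‖gradient (ℓ k) (v k j)‖ ^ 2 := by
      rw [hD, Finset.mul_sum]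
      apply Finset.sum_le_sum
      intro k _
      have e : ‖v k h - w‖ = γ * ‖∑ j ∈ range h, gradient (ℓ k) (v k j)‖ := by
        rw [← norm_neg, neg_sub, hclosed k h, norm_smul, Real.norm_eq_abs, abs_of_pos hγ]
      rw [e, mul_pow]
      apply mul_le_mul_of_nonneg_left _ (by positivity : (0:ℝ) ≤ γ ^ 2)
      calc ‖∑ j ∈ range h, gradient (ℓ k) (v k j)‖ ^ 2
          ≤ (∑ j ∈ range h, ‖gradient (ℓ k) (v k j)‖) ^ 2 :=
            pow_le_pow_left₀ (norm_nonneg _) (norm_sum_le _ _) 2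
        _ ≤ (range h).card * ∑ j ∈ range h, ‖gradient (ℓ k) (v k j)‖ ^ 2 :=
            sq_sum_le_card_mul_sum_sq
        _ = (h : ℝ) * ∑ j ∈ range h, ‖gradient (ℓ k) (v k j)‖ ^ 2 := by
            rw [Finset.card_range]
    have step2 : ∑ k, (h : ℝ) * ∑ j ∈ range h, ‖gradient (ℓ k) (v k j)‖ ^ 2
        ≤ (h : ℝ) * (2 * L ^ 2 * ∑ j ∈ range h, D j
            + (h : ℝ) * (4 * N * G ^ 2 + 4 * N * g)) := by
      rw [← Finset.mul_sum]
      apply mul_le_mul_of_nonneg_left _ (by positivity : (0:ℝ) ≤ (h : ℝ))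
      rw [Finset.sum_comm]
      have hinner : ∀ j ∈ range h, ∑ k, ‖gradient (ℓ k) (v k j)‖ ^ 2
          ≤ 2 * L ^ 2 * D j + (4 * N * G ^ 2 + 4 * N * g) := by
        intro j _
        calc ∑ k, ‖gradient (ℓ k) (v k j)‖ ^ 2
            ≤ ∑ k, (2 * L ^ 2 * ‖v k j - w‖ ^ 2
              + 4 * ‖gradient (ℓ k) w - gradient lH w‖ ^ 2 + 4 * g) :=
              Finset.sum_le_sum fun k _ => hgrad k j
          _ = 2 * L ^ 2 * D j
                + 4 * ∑ k, ‖gradient (ℓ k) w - gradient lH w‖ ^ 2 + N * (4 * g) := by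
              simp only [hD, hN]
              rw [Finset.sum_add_distrib, Finset.sum_add_distrib, ← Finset.mul_sum,
                ← Finset.mul_sum, Finset.sum_const, nsmul_eq_mul, Finset.card_univ]
          _ ≤ 2 * L ^ 2 * D j + (4 * N * G ^ 2 + 4 * N * g) := by nlinarith [hhet]
      calc ∑ j ∈ range h, ∑ k, ‖gradient (ℓ k) (v k j)‖ ^ 2
          ≤ ∑ j ∈ range h, (2 * L ^ 2 * D j + (4 * N * G ^ 2 + 4 * N * g)) :=
            Finset.sum_le_sum hinner
        _ = 2 * L ^ 2 * ∑ j ∈ range h, D j + (h : ℝ) * (4 * N * G ^ 2 + 4 * N * g) := by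
            rw [Finset.sum_add_distrib, ← Finset.mul_sum, Finset.sum_const, Finset.card_range,
              nsmul_eq_mul]
    calc D h ≤ γ ^ 2 * ∑ k, (h : ℝ) * ∑ j ∈ range h, ‖gradient (ℓ k) (v k j)‖ ^ 2 := step1
      _ ≤ γ ^ 2 * ((h : ℝ) * (2 * L ^ 2 * ∑ j ∈ range h, D j
            + (h : ℝ) * (4 * N * G ^ 2 + 4 * N * g))) :=
          mul_le_mul_of_nonneg_left step2 (by positivity)
      _ = 2 * L ^ 2 * γ ^ 2 * h * ∑ j ∈ range h, D j
            + 4 * γ ^ 2 * (h : ℝ) ^ 2 * N * (G ^ 2 + g) := by ring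
  have hpartial : ∀ h, h ≤ H → ∑ j ∈ range h, D j ≤ S := fun h hh =>
    Finset.sum_le_sum_of_subset_of_nonneg (Finset.range_subset_range.2 hh)
      fun j _ _ => hDnonneg j
  have hsum : S ≤ ∑ h ∈ range H,
      (2 * L ^ 2 * γ ^ 2 * S * (h : ℝ) + 4 * γ ^ 2 * N * (G ^ 2 + g) * (h : ℝ) ^ 2) := by
    rw [hS]
    apply Finset.sum_le_sum
    intro h hh
    calc D h ≤ 2 * L ^ 2 * γ ^ 2 * h * ∑ j ∈ range h, D j
        + 4 * γ ^ 2 * (h : ℝ) ^ 2 * N * (G ^ 2 + g) := hDbound h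
      _ ≤ 2 * L ^ 2 * γ ^ 2 * h * S + 4 * γ ^ 2 * (h : ℝ) ^ 2 * N * (G ^ 2 + g) := by
          have := mul_le_mul_of_nonneg_left (hpartial h (le_of_lt (Finset.mem_range.1 hh)))
            (by positivity : (0:ℝ) ≤ 2 * L ^ 2 * γ ^ 2 * h)
          linarith
      _ = 2 * L ^ 2 * γ ^ 2 * S * (h : ℝ) + 4 * γ ^ 2 * N * (G ^ 2 + g) * (h : ℝ) ^ 2 := by
          ring
  have hsplit : ∑ h ∈ range H,
      (2 * L ^ 2 * γ ^ 2 * S * (h : ℝ) + 4 * γ ^ 2 * N * (G ^ 2 + g) * (h : ℝ) ^ 2)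
      = 2 * L ^ 2 * γ ^ 2 * S * ∑ h ∈ range H, (h : ℝ)
        + 4 * γ ^ 2 * N * (G ^ 2 + g) * ∑ h ∈ range H, (h : ℝ) ^ 2 := by
    rw [Finset.sum_add_distrib, ← Finset.mul_sum, ← Finset.mul_sum]
  have hsq : ∑ h ∈ range H, (h : ℝ) ^ 2 ≤ (H : ℝ) ^ 2 * ((H : ℝ) - 1) / 2 := by
    have h1 : ∑ h ∈ range H, (h : ℝ) ^ 2 ≤ ∑ h ∈ range H, (H : ℝ) * (h : ℝ) := by
      apply Finset.sum_le_sum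
      intro h hh
      have hle : (h : ℝ) ≤ (H : ℝ) := by
        exact_mod_cast le_of_lt (Finset.mem_range.1 hh)
      have h0 : (0 : ℝ) ≤ (h : ℝ) := Nat.cast_nonneg h
      nlinarith
    rw [← Finset.mul_sum, hid H] at h1
    linarith
  rw [hsplit, hid H] at hsum
  have hsum2 : S ≤ L ^ 2 * γ ^ 2 * (H : ℝ) * ((H : ℝ) - 1) * S
      + 2 * γ ^ 2 * N * (H : ℝ) ^ 2 * ((H : ℝ) - 1) * (G ^ 2 + g) := by
    have h2 : 4 * γ ^ 2 * N * (G ^ 2 + g) * ∑ h ∈ range H, (h : ℝ) ^ 2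
        ≤ 4 * γ ^ 2 * N * (G ^ 2 + g) * ((H : ℝ) ^ 2 * ((H : ℝ) - 1) / 2) := by
      apply mul_le_mul_of_nonneg_left hsq (by positivity)
    nlinarith [hsum]
  have hkey : L ^ 2 * γ ^ 2 * (H : ℝ) * ((H : ℝ) - 1) * S ≤ 1 / 2 * S :=
    mul_le_mul_of_nonneg_right hstep hSnonneg
  have hgoal : ∑ k, ∑ h ∈ Finset.range H, ‖v k h - w‖ ^ 2 = S := by
    rw [hS, hD]; exact Finset.sum_comm
  rw [hgoal]
  nlinarith [hsum2, hkey]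
end

section
/- Let d ≥ 1, let 𝓗 be a finite nonempty index set, and for each k ∈ 𝓗 let ℓ_k : ℝ^d → ℝ be L-smooth for some L > 0. Set ℓ_𝓗 = (1/|𝓗|)∑_{k∈𝓗} ℓ_k and assume (1/|𝓗|)∑_{k∈𝓗}‖∇ℓ_k(w') − ∇ℓ_𝓗(w')‖² ≤ G² for all w' ∈ ℝ^d. Let γ > 0 and H ≥ 1 satisfy L²γ²H(H−1) ≤ 1/2, fix w ∈ ℝ^d, define for each k ∈ 𝓗 the local sequence v_{k,0} = w, v_{k,h+1} = v_{k,h} − γ∇ℓ_k(v_{k,h}), and set Δ = (1/|𝓗|)∑_{k∈𝓗}(v_{k,H} − w) = −(γ/|𝓗|)∑_{k∈𝓗}∑_{h=0}^{H−1}∇ℓ_k(v_{k,h}). Then ‖Δ + Hγ∇ℓ_𝓗(w)‖² ≤ 4L²γ⁴H³(H−1)(G² + ‖∇ℓ_𝓗(w)‖²). -/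
open Finset

lemma aux_norm_sum_sq {E : Type*} [NormedAddCommGroup E] {α : Type*} (s : Finset α) (f : α → E) :
    ‖∑ i ∈ s, f i‖ ^ 2 ≤ (s.card : ℝ) * ∑ i ∈ s, ‖f i‖ ^ 2 := by
  calc ‖∑ i ∈ s, f i‖ ^ 2 ≤ (∑ i ∈ s, ‖f i‖) ^ 2 :=
        pow_le_pow_left₀ (norm_nonneg _) (norm_sum_le _ _) 2
    _ ≤ (s.card : ℝ) * ∑ i ∈ s, ‖f i‖ ^ 2 := sq_sum_le_card_mul_sum_sq

set_option maxHeartbeats 2000000 in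
lemma aux_main {E : Type*} [NormedAddCommGroup E] [InnerProductSpace ℝ E]
    {ι : Type} [Fintype ι] [Nonempty ι]
    (g : ι → E → E) (gH : E) (L G γ : ℝ) (H : ℕ) (w : E) (v : ι → ℕ → E)
    (hL : 0 < L) (hγ : 0 < γ) (hH : 1 ≤ H)
    (hstep : L ^ 2 * γ ^ 2 * (H : ℝ) * ((H : ℝ) - 1) ≤ 1 / 2)
    (hGH : gH = (Fintype.card ι : ℝ)⁻¹ • ∑ k, g k w)
    (hsm : ∀ k u, ‖g k u - g k w‖ ≤ L * ‖u - w‖)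
    (hhet : (Fintype.card ι : ℝ)⁻¹ * ∑ k, ‖g k w - gH‖ ^ 2 ≤ G ^ 2)
    (hv0 : ∀ k, v k 0 = w)
    (hrec : ∀ k h, v k (h + 1) = v k h - γ • g k (v k h)) :
    ‖((Fintype.card ι : ℝ)⁻¹ • ∑ k, (v k H - w)) + ((H : ℝ) * γ) • gH‖ ^ 2
      ≤ 4 * L ^ 2 * γ ^ 4 * (H : ℝ) ^ 3 * ((H : ℝ) - 1) * (G ^ 2 + ‖gH‖ ^ 2) := by
  classical
  set c : ℝ := (Fintype.card ι : ℝ) with hcdef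
  have hc : (0 : ℝ) < c := by
    rw [hcdef]
    exact_mod_cast Fintype.card_pos (α := ι)
  have hH1 : (1 : ℝ) ≤ (H : ℝ) := by exact_mod_cast hH
  -- unrolled recursion
  have hun : ∀ k h, v k h = w - γ • ∑ j ∈ range h, g k (v k j) := by
    intro k h
    induction h with
    | zero => simpa using hv0 k
    | succ n ih =>
      rw [hrec k n, sum_range_succ, smul_add, ← sub_sub, ih]
  have hvw : ∀ k h, v k h - w = -(γ • ∑ j ∈ range h, g k (v k j)) := by
    intro k h
    rw [hun k h]
    exact sub_sub_cancel_left _ _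
  -- Gauss sums
  have hsum1 : (∑ h ∈ range H, (h : ℝ)) * 2 = (H : ℝ) * ((H : ℝ) - 1) := by
    have h0 := Finset.sum_range_id_mul_two H
    have h1 : (((∑ i ∈ range H, i) * 2 : ℕ) : ℝ) = ((H * (H - 1) : ℕ) : ℝ) := by rw [h0]
    push_cast [Nat.cast_sub hH] at h1
    simpa using h1
  have hsumnn : (0 : ℝ) ≤ ∑ h ∈ range H, (h : ℝ) :=
    Finset.sum_nonneg fun h _ => Nat.cast_nonneg h
  have hsum2 : ∑ h ∈ range H, (h : ℝ) ^ 2 ≤ ((H : ℝ) - 1) * ∑ h ∈ range H, (h : ℝ) := by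
    rw [Finset.mul_sum]
    refine Finset.sum_le_sum fun h hh => ?_
    have hlt : (h : ℝ) + 1 ≤ (H : ℝ) := by exact_mod_cast Finset.mem_range.mp hh
    nlinarith [show (0:ℝ) ≤ (h:ℝ) by positivity]
  -- pointwise gradient bound
  have hgb : ∀ k u, ‖g k u‖ ^ 2 ≤ 2 * L ^ 2 * ‖u - w‖ ^ 2 + 2 * ‖g k w‖ ^ 2 := by
    intro k u
    have h1 : ‖g k u‖ ≤ ‖g k u - g k w‖ + ‖g k w‖ := by
      simpa using norm_add_le (g k u - g k w) (g k w)
    have h2 := hsm k u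
    nlinarith [norm_nonneg (g k u), norm_nonneg (g k w), norm_nonneg (g k u - g k w),
      norm_nonneg (u - w), hL.le, sq_nonneg (‖g k u - g k w‖ - ‖g k w‖)]
  -- drift bound
  set S : ι → ℝ := fun k => ∑ h ∈ range H, ‖v k h - w‖ ^ 2 with hSdef
  have hSnn : ∀ k, 0 ≤ S k := fun k => Finset.sum_nonneg fun h _ => sq_nonneg _
  have hdrift : ∀ k, S k ≤ 2 * γ ^ 2 * (H : ℝ) ^ 2 * ((H : ℝ) - 1) * ‖g k w‖ ^ 2 := by
    intro k
    have hstepk : ∀ h ∈ range H, ‖v k h - w‖ ^ 2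
        ≤ 2 * γ ^ 2 * L ^ 2 * (h : ℝ) * S k + 2 * γ ^ 2 * (h : ℝ) ^ 2 * ‖g k w‖ ^ 2 := by
      intro h hh
      have e2 : ‖v k h - w‖ ^ 2 = γ ^ 2 * ‖∑ j ∈ range h, g k (v k j)‖ ^ 2 := by
        rw [hvw k h, norm_neg, norm_smul, Real.norm_eq_abs, abs_of_pos hγ, mul_pow]
      have e3 := aux_norm_sum_sq (range h) (fun j => g k (v k j))
      rw [card_range] at e3
      have e5 : ∑ j ∈ range h, ‖v k j - w‖ ^ 2 ≤ S k := by
        apply Finset.sum_le_sum_of_subset_of_nonneg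
        · exact Finset.range_subset_range.mpr (le_of_lt (Finset.mem_range.mp hh))
        · exact fun j _ _ => sq_nonneg _
      have e4 : ∑ j ∈ range h, ‖g k (v k j)‖ ^ 2
          ≤ 2 * L ^ 2 * S k + 2 * (h : ℝ) * ‖g k w‖ ^ 2 := by
        calc ∑ j ∈ range h, ‖g k (v k j)‖ ^ 2
            ≤ ∑ j ∈ range h, (2 * L ^ 2 * ‖v k j - w‖ ^ 2 + 2 * ‖g k w‖ ^ 2) :=
              Finset.sum_le_sum fun j _ => hgb k (v k j)
          _ = 2 * L ^ 2 * (∑ j ∈ range h, ‖v k j - w‖ ^ 2) + 2 * (h : ℝ) * ‖g k w‖ ^ 2 := by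
              rw [Finset.sum_add_distrib, ← Finset.mul_sum, Finset.sum_const, card_range,
                nsmul_eq_mul]
              ring
          _ ≤ 2 * L ^ 2 * S k + 2 * (h : ℝ) * ‖g k w‖ ^ 2 := by
              have := mul_le_mul_of_nonneg_left e5 (show (0:ℝ) ≤ 2 * L ^ 2 by positivity)
              linarith
      calc ‖v k h - w‖ ^ 2 = γ ^ 2 * ‖∑ j ∈ range h, g k (v k j)‖ ^ 2 := e2
        _ ≤ γ ^ 2 * ((h : ℝ) * ∑ j ∈ range h, ‖g k (v k j)‖ ^ 2) :=
            mul_le_mul_of_nonneg_left e3 (by positivity)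
        _ ≤ γ ^ 2 * ((h : ℝ) * (2 * L ^ 2 * S k + 2 * (h : ℝ) * ‖g k w‖ ^ 2)) := by
            apply mul_le_mul_of_nonneg_left _ (by positivity)
            exact mul_le_mul_of_nonneg_left e4 (Nat.cast_nonneg h)
        _ = 2 * γ ^ 2 * L ^ 2 * (h : ℝ) * S k + 2 * γ ^ 2 * (h : ℝ) ^ 2 * ‖g k w‖ ^ 2 := by
            ring
    have hsumineq : S k ≤ 2 * γ ^ 2 * L ^ 2 * S k * (∑ h ∈ range H, (h : ℝ))
        + 2 * γ ^ 2 * ‖g k w‖ ^ 2 * (∑ h ∈ range H, (h : ℝ) ^ 2) := by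
      calc S k ≤ ∑ h ∈ range H,
            (2 * γ ^ 2 * L ^ 2 * (h : ℝ) * S k + 2 * γ ^ 2 * (h : ℝ) ^ 2 * ‖g k w‖ ^ 2) :=
            Finset.sum_le_sum hstepk
        _ = (∑ h ∈ range H, (2 * γ ^ 2 * L ^ 2 * S k) * (h : ℝ))
            + ∑ h ∈ range H, (2 * γ ^ 2 * ‖g k w‖ ^ 2) * (h : ℝ) ^ 2 := by
            rw [Finset.sum_add_distrib]
            congr 1 <;> exact Finset.sum_congr rfl fun h _ => by ring
        _ = _ := by rw [← Finset.mul_sum, ← Finset.mul_sum]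
    have key1 : 2 * γ ^ 2 * L ^ 2 * S k * (∑ h ∈ range H, (h : ℝ)) ≤ (1 / 2) * S k := by
      have e : 2 * γ ^ 2 * L ^ 2 * S k * (∑ h ∈ range H, (h : ℝ))
          = γ ^ 2 * L ^ 2 * S k * ((H : ℝ) * ((H : ℝ) - 1)) := by
        rw [← hsum1]; ring
      rw [e]
      nlinarith [mul_le_mul_of_nonneg_right hstep (hSnn k)]
    have key2 : 2 * γ ^ 2 * ‖g k w‖ ^ 2 * (∑ h ∈ range H, (h : ℝ) ^ 2)
        ≤ γ ^ 2 * (H : ℝ) ^ 2 * ((H : ℝ) - 1) * ‖g k w‖ ^ 2 := by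
      have e : (∑ h ∈ range H, (h : ℝ)) = (H : ℝ) * ((H : ℝ) - 1) / 2 := by
        linarith [hsum1]
      have hb : ∑ h ∈ range H, (h : ℝ) ^ 2 ≤ ((H : ℝ) - 1) * ((H : ℝ) * ((H : ℝ) - 1) / 2) := by
        rw [← e]; exact hsum2
      have h2 : 2 * γ ^ 2 * ‖g k w‖ ^ 2 * (∑ h ∈ range H, (h : ℝ) ^ 2)
          ≤ 2 * γ ^ 2 * ‖g k w‖ ^ 2 * (((H : ℝ) - 1) * ((H : ℝ) * ((H : ℝ) - 1) / 2)) :=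
        mul_le_mul_of_nonneg_left hb (by positivity)
      nlinarith [h2, mul_nonneg (mul_nonneg (mul_nonneg (sq_nonneg γ)
        (show (0:ℝ) ≤ (H:ℝ) by positivity)) (sub_nonneg.mpr hH1)) (sq_nonneg ‖g k w‖)]
    linarith
  clear_value c S
  -- decomposition of the bias term
  have hterm : ∀ k, (v k H - w) + ((H : ℝ) * γ) • g k w
      = γ • ((H : ℝ) • g k w - ∑ h ∈ range H, g k (v k h)) := by
    intro k
    rw [hun k H]
    module
  have hdec : (c⁻¹ • ∑ k, (v k H - w)) + ((H : ℝ) * γ) • gH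
      = c⁻¹ • ∑ k, γ • ((H : ℝ) • g k w - ∑ h ∈ range H, g k (v k h)) := by
    rw [hGH]
    rw [show (((H : ℝ) * γ) • (c⁻¹ • ∑ k, g k w) : E)
        = c⁻¹ • ∑ k, ((H : ℝ) * γ) • g k w from by
      rw [smul_comm ((H : ℝ) * γ) c⁻¹ (∑ k, g k w), Finset.smul_sum]]
    rw [← smul_add, ← Finset.sum_add_distrib, Finset.sum_congr rfl fun k _ => hterm k]
  -- bound on each k-term
  have hZ : ∀ k, (H : ℝ) • g k w - ∑ h ∈ range H, g k (v k h)
      = ∑ h ∈ range H, (g k w - g k (v k h)) := by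
    intro k
    rw [Finset.sum_sub_distrib, Finset.sum_const, card_range, Nat.cast_smul_eq_nsmul]
  have hZb : ∀ k, ‖(H : ℝ) • g k w - ∑ h ∈ range H, g k (v k h)‖ ^ 2
      ≤ (H : ℝ) * (L ^ 2 * S k) := by
    intro k
    rw [hZ k]
    calc ‖∑ h ∈ range H, (g k w - g k (v k h))‖ ^ 2
        ≤ (H : ℝ) * ∑ h ∈ range H, ‖g k w - g k (v k h)‖ ^ 2 := by
          have := aux_norm_sum_sq (range H) (fun h => g k w - g k (v k h))
          rwa [card_range] at this
      _ ≤ (H : ℝ) * ∑ h ∈ range H, L ^ 2 * ‖v k h - w‖ ^ 2 := by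
          apply mul_le_mul_of_nonneg_left _ (Nat.cast_nonneg H)
          refine Finset.sum_le_sum fun h _ => ?_
          rw [norm_sub_rev]
          have h1 := hsm k (v k h)
          nlinarith [norm_nonneg (g k (v k h) - g k w), norm_nonneg (v k h - w), hL.le]
      _ = (H : ℝ) * (L ^ 2 * S k) := by rw [← Finset.mul_sum]; simp only [hSdef]
  -- variance bound
  have hvar : c⁻¹ * ∑ k, ‖g k w‖ ^ 2 ≤ G ^ 2 + ‖gH‖ ^ 2 := by
    have hmean : ∑ k, g k w = c • gH := by
      rw [hGH, smul_smul, mul_inv_cancel₀ hc.ne', one_smul]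
    have hexp : ∀ k : ι, ‖g k w‖ ^ 2
        = ‖g k w - gH‖ ^ 2 + 2 * (inner ℝ (g k w - gH) gH : ℝ) + ‖gH‖ ^ 2 := fun k => by
      have := norm_add_sq_real (g k w - gH) gH
      simpa using this
    have hcross : ∑ k, 2 * (inner ℝ (g k w - gH) gH : ℝ) = 0 := by
      rw [← Finset.mul_sum, ← sum_inner, Finset.sum_sub_distrib, hmean, Finset.sum_const,
        Finset.card_univ, ← Nat.cast_smul_eq_nsmul ℝ, ← hcdef, sub_self, inner_zero_left,
        mul_zero]
    have hsum : ∑ k, ‖g k w‖ ^ 2 = (∑ k, ‖g k w - gH‖ ^ 2) + c * ‖gH‖ ^ 2 := by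
      rw [Finset.sum_congr rfl fun k _ => hexp k, Finset.sum_add_distrib,
        Finset.sum_add_distrib, hcross, add_zero, Finset.sum_const, Finset.card_univ,
        nsmul_eq_mul, ← hcdef]
    rw [hsum, mul_add]
    have h1 : c⁻¹ * (c * ‖gH‖ ^ 2) = ‖gH‖ ^ 2 := by field_simp
    rw [h1]
    linarith [hhet]
  -- final combination
  have hpercall : ∀ k : ι, ‖γ • ((H : ℝ) • g k w - ∑ h ∈ range H, g k (v k h))‖ ^ 2
      ≤ 2 * L ^ 2 * γ ^ 4 * (H : ℝ) ^ 3 * ((H : ℝ) - 1) * ‖g k w‖ ^ 2 := by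
    intro k
    calc ‖γ • ((H : ℝ) • g k w - ∑ h ∈ range H, g k (v k h))‖ ^ 2
        = γ ^ 2 * ‖(H : ℝ) • g k w - ∑ h ∈ range H, g k (v k h)‖ ^ 2 := by
          rw [norm_smul, Real.norm_eq_abs, mul_pow, sq_abs]
      _ ≤ γ ^ 2 * ((H : ℝ) * (L ^ 2 * S k)) := mul_le_mul_of_nonneg_left (hZb k) (by positivity)
      _ ≤ γ ^ 2 * ((H : ℝ) * (L ^ 2
            * (2 * γ ^ 2 * (H : ℝ) ^ 2 * ((H : ℝ) - 1) * ‖g k w‖ ^ 2))) := by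
          apply mul_le_mul_of_nonneg_left _ (by positivity)
          apply mul_le_mul_of_nonneg_left _ (Nat.cast_nonneg H)
          exact mul_le_mul_of_nonneg_left (hdrift k) (by positivity)
      _ = 2 * L ^ 2 * γ ^ 4 * (H : ℝ) ^ 3 * ((H : ℝ) - 1) * ‖g k w‖ ^ 2 := by ring
  have hmain : ‖(c⁻¹ • ∑ k, (v k H - w)) + ((H : ℝ) * γ) • gH‖ ^ 2
      ≤ 2 * L ^ 2 * γ ^ 4 * (H : ℝ) ^ 3 * ((H : ℝ) - 1) * (G ^ 2 + ‖gH‖ ^ 2) := by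
    calc ‖(c⁻¹ • ∑ k, (v k H - w)) + ((H : ℝ) * γ) • gH‖ ^ 2
        = ‖c⁻¹ • ∑ k, γ • ((H : ℝ) • g k w - ∑ h ∈ range H, g k (v k h))‖ ^ 2 := by rw [hdec]
      _ ≤ c⁻¹ * ∑ k, ‖γ • ((H : ℝ) • g k w - ∑ h ∈ range H, g k (v k h))‖ ^ 2 := by
          rw [norm_smul, Real.norm_eq_abs, abs_of_pos (inv_pos.mpr hc), mul_pow]
          have h2 := aux_norm_sum_sq Finset.univ
            (fun k => γ • ((H : ℝ) • g k w - ∑ h ∈ range H, g k (v k h)))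
          rw [Finset.card_univ, ← hcdef] at h2
          calc (c⁻¹) ^ 2 * ‖∑ k, γ • ((H : ℝ) • g k w - ∑ h ∈ range H, g k (v k h))‖ ^ 2
              ≤ (c⁻¹) ^ 2 * (c * ∑ k,
                  ‖γ • ((H : ℝ) • g k w - ∑ h ∈ range H, g k (v k h))‖ ^ 2) :=
                mul_le_mul_of_nonneg_left h2 (by positivity)
            _ = c⁻¹ * ∑ k, ‖γ • ((H : ℝ) • g k w - ∑ h ∈ range H, g k (v k h))‖ ^ 2 := by
                field_simp
      _ ≤ c⁻¹ * ∑ k, 2 * L ^ 2 * γ ^ 4 * (H : ℝ) ^ 3 * ((H : ℝ) - 1) * ‖g k w‖ ^ 2 := by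
          apply mul_le_mul_of_nonneg_left _ (by positivity)
          exact Finset.sum_le_sum fun k _ => hpercall k
      _ = 2 * L ^ 2 * γ ^ 4 * (H : ℝ) ^ 3 * ((H : ℝ) - 1) * (c⁻¹ * ∑ k, ‖g k w‖ ^ 2) := by
          rw [← Finset.mul_sum]
          ring
      _ ≤ 2 * L ^ 2 * γ ^ 4 * (H : ℝ) ^ 3 * ((H : ℝ) - 1) * (G ^ 2 + ‖gH‖ ^ 2) := by
          apply mul_le_mul_of_nonneg_left hvar
          have h1 : (0:ℝ) ≤ (H : ℝ) - 1 := sub_nonneg.mpr hH1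
          positivity
  have hfac : (0:ℝ) ≤ L ^ 2 * γ ^ 4 * (H : ℝ) ^ 3 * ((H : ℝ) - 1) * (G ^ 2 + ‖gH‖ ^ 2) := by
    have h1 : (0:ℝ) ≤ (H : ℝ) - 1 := sub_nonneg.mpr hH1
    positivity
  linarith


/-- Lemma (bias of the averaged local update): with the same setup as the drift lemma,
the average update `Δ = (1/|𝓗|) ∑_k (v_{k,H} - w)` satisfies
`‖Δ + Hγ∇ℓ_𝓗(w)‖² ≤ 4L²γ⁴H³(H-1)(G² + ‖∇ℓ_𝓗(w)‖²)`. -/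
theorem stmt_15 (d : ℕ) (hd : 1 ≤ d) (ι : Type) [Fintype ι] [Nonempty ι]
    (ℓ : ι → EuclideanSpace ℝ (Fin d) → ℝ) (L G : ℝ) (hL : 0 < L)
    (lH : EuclideanSpace ℝ (Fin d) → ℝ)
    (hlH : lH = fun w => (Fintype.card ι : ℝ)⁻¹ * ∑ k, ℓ k w)
    (hdiff : ∀ k, Differentiable ℝ (ℓ k))
    (hsmooth : ∀ (k : ι) (w w' : EuclideanSpace ℝ (Fin d)),
      ‖gradient (ℓ k) w' - gradient (ℓ k) w‖ ≤ L * ‖w' - w‖)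
    (hhetero : ∀ w' : EuclideanSpace ℝ (Fin d),
      (Fintype.card ι : ℝ)⁻¹ * ∑ k, ‖gradient (ℓ k) w' - gradient lH w'‖ ^ 2 ≤ G ^ 2)
    (γ : ℝ) (hγ : 0 < γ) (H : ℕ) (hH : 1 ≤ H)
    (hstep : L ^ 2 * γ ^ 2 * (H : ℝ) * ((H : ℝ) - 1) ≤ 1 / 2)
    (w : EuclideanSpace ℝ (Fin d)) (v : ι → ℕ → EuclideanSpace ℝ (Fin d))
    (hv0 : ∀ k, v k 0 = w)
    (hrec : ∀ (k : ι) (h : ℕ), v k (h + 1) = v k h - γ • gradient (ℓ k) (v k h))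
    (Δ : EuclideanSpace ℝ (Fin d))
    (hΔ : Δ = (Fintype.card ι : ℝ)⁻¹ • ∑ k, (v k H - w)) :
    ‖Δ + ((H : ℝ) * γ) • gradient lH w‖ ^ 2
      ≤ 4 * L ^ 2 * γ ^ 4 * (H : ℝ) ^ 3 * ((H : ℝ) - 1)
          * (G ^ 2 + ‖gradient lH w‖ ^ 2) := by
  have hg : gradient lH w = (Fintype.card ι : ℝ)⁻¹ • ∑ k, gradient (ℓ k) w := by
    have hfd : fderiv ℝ lH w = (Fintype.card ι : ℝ)⁻¹ • ∑ k, fderiv ℝ (ℓ k) w := by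
      rw [hlH, fderiv_const_mul (DifferentiableAt.fun_sum fun k _ => (hdiff k).differentiableAt),
        fderiv_fun_sum fun k _ => (hdiff k).differentiableAt]
    unfold gradient
    rw [hfd, map_smul, map_sum]
  rw [hΔ]
  exact aux_main (fun k => gradient (ℓ k)) (gradient lH w) L G γ H w v hL hγ hH hstep hg
    (fun k u => hsmooth k w u) (hhetero w) hv0 hrec
end

section
/- Let n, d ≥ 1, let f be an integer with 0 ≤ f < n/2, let κ ≥ 0, and let A : (ℝ^d)ⁿ → ℝ^d be an (f,κ)-robust aggregator. Let 𝓗 ⊆ {1,…,n} with |𝓗| = n − f, let each ℓ_k : ℝ^d → ℝ (k ∈ 𝓗) be L-smooth (L > 0), set ℓ_𝓗 = (1/|𝓗|)∑_{k∈𝓗} ℓ_k, assume ℓ* := inf_{w∈ℝ^d} ℓ_𝓗(w) is finite, assume the heterogeneity bound (1/|𝓗|)∑_{k∈𝓗}‖∇ℓ_k(w') − ∇ℓ_𝓗(w')‖² ≤ G² for all w', and assume the Polyak-Łojasiewicz condition: there is μ > 0 with ℓ_𝓗(w) − ℓ* ≤ (1/(2μ))‖∇ℓ_𝓗(w)‖²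 for all w ∈ ℝ^d. Fix integers H ≥ 1 and T ≥ 1 and a real β ∈ (0,1), set c' = max(4√2, √(384κ)) and γ = 1/(c'·L·H·T^{1−β}). Consider FedRo iterates: for each t, honest k ∈ 𝓗 computes w_{t,0}^{(k)} = w_t, w_{t,h+1}^{(k)} = w_{t,h}^{(k)} − γ∇ℓ_k(w_{t,h}^{(k)}) for 0 ≤ h < H; uploads u_t^{(k)} are arbitrary for k ∉ 𝓗 and equal w_{t,H}^{(k)} for k ∈ 𝓗; and w_{t+1} = w_t + A(u_t^{(1)} − w_t, …, u_t^{(n)} − w_t). Then for any initialization w₀ and any Byzantine uploads, ℓ_𝓗(w_T) − ℓ* ≤ exp(−μT^β/(8c'L))·(ℓ_𝓗(w₀) − ℓ*) + G²/(2μT^{2−2β}) + 45κG²/μ. -/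
open Finset
open scoped RealInnerProductSpace
set_option linter.unusedSectionVars false
set_option linter.deprecated false
set_option linter.unusedVariables false
set_option maxHeartbeats 1600000000

section Aux
variable {E : Type*} [NormedAddCommGroup E] [InnerProductSpace ℝ E] [CompleteSpace E]

lemma aux_norm_sum_sq_le {ι : Type*} (s : Finset ι) (z : ι → E) :
    ‖∑ i ∈ s, z i‖ ^ 2 ≤ (s.card : ℝ) * ∑ i ∈ s, ‖z i‖ ^ 2 := by
  calc ‖∑ i ∈ s, z i‖ ^ 2 ≤ (∑ i ∈ s, ‖z i‖) ^ 2 := by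
        apply pow_le_pow_left₀ (norm_nonneg _) (norm_sum_le _ _)
    _ ≤ (s.card : ℝ) * ∑ i ∈ s, ‖z i‖ ^ 2 := sq_sum_le_card_mul_sum_sq

lemma aux_three_sq (a b c : E) : ‖a + b + c‖ ^ 2 ≤ 3 * (‖a‖ ^ 2 + ‖b‖ ^ 2 + ‖c‖ ^ 2) := by
  have h := norm_add₃_le (a := a) (b := b) (c := c)
  nlinarith [norm_nonneg a, norm_nonneg b, norm_nonneg c, sq_nonneg (‖a‖ - ‖b‖),
    sq_nonneg (‖a‖ - ‖c‖), sq_nonneg (‖b‖ - ‖c‖), norm_nonneg (a + b + c)]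

lemma aux_two_sq (a b : E) : ‖a + b‖ ^ 2 ≤ 2 * ‖a‖ ^ 2 + 2 * ‖b‖ ^ 2 := by
  have h := norm_add_le a b
  nlinarith [norm_nonneg a, norm_nonneg b, sq_nonneg (‖a‖ - ‖b‖), norm_nonneg (a + b)]

lemma aux_fderiv_eq_inner (f : E → ℝ) (x y : E) :
    fderiv ℝ f x y = ⟪gradient f x, y⟫ := by
  rw [gradient]
  have : InnerProductSpace.toDual ℝ E ((InnerProductSpace.toDual ℝ E).symm (fderiv ℝ f x))
      = fderiv ℝ f x := (InnerProductSpace.toDual ℝ E).apply_symm_apply _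
  conv_lhs => rw [← this]
  simp [InnerProductSpace.toDual_apply_apply]

lemma aux_recursion (δ : ℕ → ℝ) (a ε : ℝ) (ha0 : 0 < a) (ha1 : a ≤ 1) (hε : 0 ≤ ε)
    (hstep : ∀ t, δ (t + 1) ≤ (1 - a) * δ t + ε) (T : ℕ) :
    δ T ≤ (1 - a) ^ T * δ 0 + ε / a := by
  induction T with
  | zero => simp; positivity
  | succ T ih =>
    have h1 : (0:ℝ) ≤ 1 - a := by linarith
    have h2 : (1 - a) * δ T ≤ (1 - a) * ((1 - a) ^ T * δ 0 + ε / a) :=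
      mul_le_mul_of_nonneg_left ih h1
    have h3 := hstep T
    have key : (1 - a) * ((1 - a) ^ T * δ 0 + ε / a) + ε = (1-a)^(T+1) * δ 0 + ε / a := by
      field_simp
      ring
    calc δ (T+1) ≤ (1 - a) * δ T + ε := h3
      _ ≤ (1 - a) * ((1 - a) ^ T * δ 0 + ε / a) + ε := by linarith
      _ = (1-a)^(T+1) * δ 0 + ε / a := key

lemma aux_descent (f : E → ℝ) (hf : Differentiable ℝ f) (L : ℝ)
    (hLip : ∀ a b : E, ‖gradient f b - gradient f a‖ ≤ L * ‖b - a‖) (x y : E) :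
    f y ≤ f x + ⟪gradient f x, y - x⟫ + L / 2 * ‖y - x‖ ^ 2 := by
  set v := y - x with hv
  have hpath : ∀ s : ℝ, HasDerivAt (fun s : ℝ => f (x + s • v))
      (⟪gradient f (x + s • v), v⟫) s := by
    intro s
    have hp : HasDerivAt (fun s : ℝ => x + s • v) v s := by
      simpa using ((hasDerivAt_id s).smul_const v).const_add x
    have hF := (hf (x + s • v)).hasFDerivAt
    have := hF.comp_hasDerivAt s hp
    simpa [Function.comp_def] using this
  set g : ℝ → ℝ := fun s => f x + s * ⟪gradient f x, v⟫ + L / 2 * s ^ 2 * ‖v‖ ^ 2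
    - f (x + s • v) with hg
  have hgderiv : ∀ s : ℝ, HasDerivAt g
      (⟪gradient f x, v⟫ + L * s * ‖v‖ ^ 2 - ⟪gradient f (x + s • v), v⟫) s := by
    intro s
    have h1 : HasDerivAt (fun s : ℝ => f x + s * ⟪gradient f x, v⟫ + L / 2 * s ^ 2 * ‖v‖ ^ 2)
        (⟪gradient f x, v⟫ + L * s * ‖v‖ ^ 2) s := by
      have ha : HasDerivAt (fun s : ℝ => s * ⟪gradient f x, v⟫) (⟪gradient f x, v⟫) s := by
        simpa using (hasDerivAt_id s).mul_const (⟪gradient f x, v⟫)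
      have hb : HasDerivAt (fun s : ℝ => L / 2 * s ^ 2 * ‖v‖ ^ 2) (L * s * ‖v‖ ^ 2) s := by
        have := ((hasDerivAt_pow 2 s).const_mul (L / 2)).mul_const (‖v‖ ^ 2)
        exact this.congr_deriv (by rw [show (2:ℕ) - 1 = 1 from rfl]; push_cast; ring)
      exact (ha.const_add (f x)).add hb
    exact h1.sub (hpath s)
  have hmono : MonotoneOn g (Set.Icc (0:ℝ) 1) := by
    apply monotoneOn_of_deriv_nonneg (convex_Icc 0 1)
    · exact fun s _ => ((hgderiv s).continuousAt).continuousWithinAt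
    · exact fun s _ => ((hgderiv s).differentiableAt).differentiableWithinAt
    · intro s hs
      rw [interior_Icc] at hs
      rw [(hgderiv s).deriv]
      have h2 : ⟪gradient f (x + s • v) - gradient f x, v⟫
          ≤ ‖gradient f (x + s • v) - gradient f x‖ * ‖v‖ := real_inner_le_norm _ _
      have h3 : ‖gradient f (x + s • v) - gradient f x‖ ≤ L * (s * ‖v‖) := by
        have := hLip x (x + s • v)
        simpa [norm_smul, abs_of_nonneg (le_of_lt hs.1)] using this
      have h4 : ⟪gradient f (x + s • v) - gradient f x, v⟫
          = ⟪gradient f (x + s • v), v⟫ - ⟪gradient f x, v⟫ := by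
        rw [inner_sub_left]
      nlinarith [norm_nonneg v, mul_le_mul_of_nonneg_right h3 (norm_nonneg v)]
  have h01 := hmono (Set.mem_Icc.2 ⟨le_refl 0, zero_le_one⟩)
    (Set.mem_Icc.2 ⟨zero_le_one, le_refl 1⟩) zero_le_one
  have hg0 : g 0 = 0 := by simp [hg]
  have hg1 : g 1 = f x + ⟪gradient f x, v⟫ + L / 2 * ‖v‖ ^ 2 - f y := by
    simp [hg, hv]
  rw [hg0, hg1] at h01
  linarith

end Aux

def IsRobust (n d fq : ℕ) (κ : ℝ)
    (A : (Fin n → EuclideanSpace ℝ (Fin d)) → EuclideanSpace ℝ (Fin d)) : Prop :=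
  ∀ (x : Fin n → EuclideanSpace ℝ (Fin d)) (S : Finset (Fin n)), S.card = n - fq →
    ‖A x - (S.card : ℝ)⁻¹ • ∑ i ∈ S, x i‖ ^ 2
      ≤ κ / (S.card : ℝ) * ∑ i ∈ S, ‖x i - (S.card : ℝ)⁻¹ • ∑ j ∈ S, x j‖ ^ 2

/-- Convergence of FedRo under the Polyak-Łojasiewicz condition with an `(f,κ)`-robust
aggregator and stepsize `γ = 1/(c'LHT^{1-β})`, `c' = max(4√2, √(384κ))`:
`ℓ_𝓗(w_T) - ℓ* ≤ exp(-μT^β/(8c'L))(ℓ_𝓗(w₀) - ℓ*) + G²/(2μT^{2-2β}) + 45κG²/μ`. -/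
theorem stmt_19 (n d f : ℕ) (hn : 1 ≤ n) (hd : 1 ≤ d) (hf : 2 * f < n)
    (κ : ℝ) (hκ : 0 ≤ κ)
    (A : (Fin n → EuclideanSpace ℝ (Fin d)) → EuclideanSpace ℝ (Fin d))
    (hA : IsRobust n d f κ A)
    (𝓗 : Finset (Fin n)) (h𝓗 : 𝓗.card = n - f)
    (ℓ : Fin n → EuclideanSpace ℝ (Fin d) → ℝ) (L G : ℝ) (hL : 0 < L)
    (hdiff : ∀ k ∈ 𝓗, Differentiable ℝ (ℓ k))
    (hsmooth : ∀ k ∈ 𝓗, ∀ w w' : EuclideanSpace ℝ (Fin d),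
      ‖gradient (ℓ k) w' - gradient (ℓ k) w‖ ≤ L * ‖w' - w‖)
    (lH : EuclideanSpace ℝ (Fin d) → ℝ)
    (hlH : lH = fun w => (𝓗.card : ℝ)⁻¹ * ∑ k ∈ 𝓗, ℓ k w)
    (hbdd : BddBelow (Set.range lH))
    (lstar : ℝ) (hlstar : lstar = ⨅ w : EuclideanSpace ℝ (Fin d), lH w)
    (hhetero : ∀ w' : EuclideanSpace ℝ (Fin d),
      (𝓗.card : ℝ)⁻¹ * ∑ k ∈ 𝓗, ‖gradient (ℓ k) w' - gradient lH w'‖ ^ 2 ≤ G ^ 2)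
    (μ : ℝ) (hμ : 0 < μ)
    (hPL : ∀ w' : EuclideanSpace ℝ (Fin d),
      lH w' - lstar ≤ (1 / (2 * μ)) * ‖gradient lH w'‖ ^ 2)
    (H T : ℕ) (hH : 1 ≤ H) (hT : 1 ≤ T)
    (β : ℝ) (hβ : 0 < β) (hβ1 : β < 1)
    (c' : ℝ) (hc' : c' = max (4 * Real.sqrt 2) (Real.sqrt (384 * κ)))
    (γ : ℝ) (hγ : γ = 1 / (c' * L * (H : ℝ) * (T : ℝ) ^ ((1 : ℝ) - β)))
    (w : ℕ → EuclideanSpace ℝ (Fin d))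
    (v : ℕ → Fin n → ℕ → EuclideanSpace ℝ (Fin d))
    (u : ℕ → Fin n → EuclideanSpace ℝ (Fin d))
    (hv0 : ∀ t, ∀ k ∈ 𝓗, v t k 0 = w t)
    (hrec : ∀ t, ∀ k ∈ 𝓗, ∀ h : ℕ,
      v t k (h + 1) = v t k h - γ • gradient (ℓ k) (v t k h))
    (hu : ∀ t, ∀ k ∈ 𝓗, u t k = v t k H)
    (hw : ∀ t, w (t + 1) = w t + A (fun k => u t k - w t)) :
    lH (w T) - lstar
      ≤ Real.exp (-(μ * (T : ℝ) ^ β) / (8 * c' * L)) * (lH (w 0) - lstar)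
        + G ^ 2 / (2 * μ * (T : ℝ) ^ ((2 : ℝ) - 2 * β))
        + 45 * κ * G ^ 2 / μ := by
  -- basic cardinality
  have hmnat : 0 < 𝓗.card := by rw [h𝓗]; omega
  set m : ℝ := (𝓗.card : ℝ) with hmdef
  have hm : (0:ℝ) < m := by rw [hmdef]; exact_mod_cast hmnat
  have him : m⁻¹ * m = 1 := inv_mul_cancel₀ hm.ne'
  clear_value m
  -- differentiability and gradient of lH
  have hdiffH : Differentiable ℝ lH := by
    rw [hlH]
    exact Differentiable.const_mul (Differentiable.fun_sum (fun k hk => hdiff k hk)) _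
  have hgradH : ∀ y, gradient lH y = m⁻¹ • ∑ k ∈ 𝓗, gradient (ℓ k) y := by
    intro y
    have hfd : fderiv ℝ lH y = m⁻¹ • ∑ k ∈ 𝓗, fderiv ℝ (ℓ k) y := by
      rw [hlH]
      rw [fderiv_const_mul (DifferentiableAt.fun_sum fun k hk => (hdiff k hk) y)]
      rw [fderiv_fun_sum (fun k hk => (hdiff k hk) y)]
    rw [gradient, hfd]
    rw [map_smul, map_sum]
    rfl
  -- smoothness of lH
  have hsmoothH : ∀ x y : EuclideanSpace ℝ (Fin d),
      ‖gradient lH y - gradient lH x‖ ≤ L * ‖y - x‖ := by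
    intro x y
    rw [hgradH, hgradH, ← smul_sub, ← Finset.sum_sub_distrib, norm_smul]
    have h1 : ‖∑ k ∈ 𝓗, (gradient (ℓ k) y - gradient (ℓ k) x)‖
        ≤ ∑ k ∈ 𝓗, L * ‖y - x‖ :=
      norm_sum_le_of_le _ (fun k hk => hsmooth k hk x y)
    rw [Finset.sum_const, nsmul_eq_mul] at h1
    have h2 : ‖m⁻¹‖ = m⁻¹ := by
      rw [Real.norm_eq_abs, abs_of_nonneg (inv_nonneg.2 hm.le)]
    rw [h2]
    calc m⁻¹ * ‖∑ k ∈ 𝓗, (gradient (ℓ k) y - gradient (ℓ k) x)‖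
        ≤ m⁻¹ * (m * (L * ‖y - x‖)) := by
          apply mul_le_mul_of_nonneg_left _ (inv_nonneg.2 hm.le)
          calc ‖∑ k ∈ 𝓗, (gradient (ℓ k) y - gradient (ℓ k) x)‖
              ≤ (𝓗.card : ℝ) * (L * ‖y - x‖) := h1
            _ = m * (L * ‖y - x‖) := by rw [hmdef]
      _ = L * ‖y - x‖ := by field_simp
  have hdesc := aux_descent lH hdiffH L hsmoothH
  -- lstar is a lower bound
  have hstar : ∀ z, lstar ≤ lH z := by
    intro z; rw [hlstar]; exact ciInf_le hbdd z
  -- gradient square bound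
  have hgs : ∀ z, ‖gradient lH z‖ ^ 2 ≤ 2 * L * (lH z - lstar) := by
    intro z
    have h := hdesc z (z - L⁻¹ • gradient lH z)
    have h2 : z - L⁻¹ • gradient lH z - z = -(L⁻¹ • gradient lH z) := by abel
    rw [h2] at h
    rw [inner_neg_right, real_inner_smul_right, real_inner_self_eq_norm_sq] at h
    rw [norm_neg, norm_smul, Real.norm_eq_abs, abs_of_nonneg (inv_nonneg.2 hL.le),
      mul_pow] at h
    have h3 := hstar (z - L⁻¹ • gradient lH z)
    have h6 : lstar ≤ lH z + -(L⁻¹ * ‖gradient lH z‖ ^ 2)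
        + L / 2 * (L⁻¹ ^ 2 * ‖gradient lH z‖ ^ 2) := le_trans h3 h
    have hkey : -(L⁻¹ * ‖gradient lH z‖ ^ 2) + L / 2 * (L⁻¹ ^ 2 * ‖gradient lH z‖ ^ 2)
        = -(‖gradient lH z‖ ^ 2 / (2 * L)) := by field_simp; ring
    have h5 : ‖gradient lH z‖ ^ 2 / (2 * L) ≤ lH z - lstar := by linarith only [hkey, h6]
    calc ‖gradient lH z‖ ^ 2 = 2 * L * (‖gradient lH z‖ ^ 2 / (2 * L)) := by field_simp
      _ ≤ 2 * L * (lH z - lstar) := mul_le_mul_of_nonneg_left h5 (by positivity)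
  -- trivial case: lH ≡ lstar
  by_cases hcase : ∀ z, lH z - lstar ≤ 0
  · have h1 : lH (w T) - lstar ≤ 0 := hcase _
    have hT2 : (0:ℝ) < (T:ℝ) ^ ((2:ℝ) - 2*β) :=
      Real.rpow_pos_of_pos (by exact_mod_cast hT) _
    have ht1 : 0 ≤ Real.exp (-(μ * (T : ℝ) ^ β) / (8 * c' * L)) * (lH (w 0) - lstar) :=
      mul_nonneg (Real.exp_nonneg _) (sub_nonneg.2 (hstar (w 0)))
    have ht2 : 0 ≤ G ^ 2 / (2 * μ * (T:ℝ) ^ ((2:ℝ) - 2*β)) :=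
      div_nonneg (sq_nonneg _) (by positivity)
    have ht3 : 0 ≤ 45 * κ * G ^ 2 / μ := by positivity
    linarith only [h1, ht1, ht2, ht3]
  push_neg at hcase
  obtain ⟨z₀, hz₀⟩ := hcase
  have hμL : μ ≤ L := by
    have h1 := hPL z₀
    have h2 := hgs z₀
    have h3 : 0 < lH z₀ - lstar := by linarith only [hz₀]
    have h4 : lH z₀ - lstar ≤ 1 / (2*μ) * (2 * L * (lH z₀ - lstar)) := by
      calc lH z₀ - lstar ≤ 1 / (2*μ) * ‖gradient lH z₀‖ ^ 2 := h1
        _ ≤ 1 / (2*μ) * (2 * L * (lH z₀ - lstar)) := by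
            apply mul_le_mul_of_nonneg_left h2 (by positivity)
    have h5 : 1 / (2*μ) * (2 * L * (lH z₀ - lstar)) = L / μ * (lH z₀ - lstar) := by
      field_simp
    rw [h5] at h4
    by_contra hcon
    push_neg at hcon
    have h6 : L / μ < 1 := (div_lt_one hμ).2 hcon
    nlinarith only [h4, h3, h6]
  -- scalar setup
  have hTpos : (0:ℝ) < (T:ℝ) := by exact_mod_cast hT
  set τ : ℝ := (T:ℝ) ^ ((1:ℝ) - β) with hτ
  have hτpos : 0 < τ := Real.rpow_pos_of_pos hTpos _
  have hτ1 : 1 ≤ τ := Real.one_le_rpow (by exact_mod_cast hT) (by linarith only [hβ1])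
  clear_value τ
  have hsqrt2 : (1:ℝ) ≤ Real.sqrt 2 := by
    rw [show (1:ℝ) = Real.sqrt 1 by simp]
    exact Real.sqrt_le_sqrt (by norm_num)
  have hc'4 : 4 ≤ c' := by
    rw [hc']
    calc (4:ℝ) = 4 * 1 := by ring
    _ ≤ 4 * Real.sqrt 2 := by linarith only [hsqrt2]
    _ ≤ _ := le_max_left _ _
  have hc'pos : 0 < c' := by linarith only [hc'4]
  have hc'sq : 32 ≤ c' ^ 2 := by
    have h1 : (4 * Real.sqrt 2) ^ 2 = 32 := by
      rw [mul_pow, Real.sq_sqrt (by norm_num : (0:ℝ) ≤ 2)]; norm_num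
    have h2 : 4 * Real.sqrt 2 ≤ c' := hc' ▸ le_max_left _ _
    nlinarith only [h1, h2, Real.sqrt_nonneg 2]
  have hκc : 384 * κ ≤ c' ^ 2 := by
    have h1 : Real.sqrt (384 * κ) ^ 2 = 384 * κ := Real.sq_sqrt (by positivity)
    have h2 : Real.sqrt (384 * κ) ≤ c' := hc' ▸ le_max_right _ _
    nlinarith only [h1, h2, Real.sqrt_nonneg (384 * κ)]
  have hHpos : (0:ℝ) < (H:ℝ) := by exact_mod_cast hH
  have hγpos : 0 < γ := by
    rw [hγ]
    exact one_div_pos.mpr (mul_pos (mul_pos (mul_pos hc'pos hL) hHpos) hτpos)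
  set α : ℝ := γ * L * (H:ℝ) with hα
  have hαpos : 0 < α := by rw [hα]; positivity
  clear_value α
  have hγ' : γ * (c' * L * (H:ℝ) * τ) = 1 := by
    rw [hγ]; field_simp
  have hαval : α * (c' * τ) = 1 := by
    rw [hα]; linear_combination hγ'
  have hα14 : α ≤ 1 / 4 := by
    have hcτ : 4 ≤ c' * τ := by nlinarith only [hc'4, hτ1, hc'pos]
    linarith only [mul_le_mul_of_nonneg_left hcτ hαpos.le, hαval]
  have hsqval : α^2 * τ^2 * c'^2 = 1 := by
    linear_combination (α * (c' * τ) + 1) * hαval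
  have h32α : 32 * α^2 * τ^2 ≤ 1 := by
    nlinarith only [sq_nonneg (α * τ), hc'sq, hsqval]
  have hκα : 384 * κ * α^2 * τ^2 ≤ 1 := by
    nlinarith only [sq_nonneg (α * τ), hκc, hsqval]
  -- per-round inequality
  set ε : ℝ := γ * (H:ℝ) * (G^2 / (16 * τ^2) + 45/8 * (κ * G^2)) with hε
  set a : ℝ := μ * γ * (H:ℝ) / 8 with ha
  clear_value ε a
  have ha0 : 0 < a := by rw [ha]; positivity
  have hα2eq : α^2 = γ^2*L^2*(H:ℝ)^2 := by rw [hα]; ring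
  have hτsq1 : 1 ≤ τ^2 := by nlinarith only [hτ1]
  have h32' : 32 * α^2 ≤ 1 := by
    have h1 := mul_le_mul_of_nonneg_left hτsq1 (by positivity : (0:ℝ) ≤ 32 * α^2)
    linarith only [h1, h32α]
  have hκabs : 384 * κ * α^2 ≤ 1 := by
    have h1 := mul_le_mul_of_nonneg_left hτsq1
      (by positivity : (0:ℝ) ≤ 384 * κ * α^2)
    linarith only [h1, hκα]
  have hLγH : L * γ * (H:ℝ) ≤ 1/2 := by
    have e : L * γ * (H:ℝ) = α := by rw [hα]; ring
    rw [e]; linarith only [hα14]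
  have hround : ∀ t : ℕ, lH (w (t+1)) - lstar ≤ (1 - a) * (lH (w t) - lstar) + ε := by
    intro t
    set x := w t with hx
    set g : Fin n → ℕ → EuclideanSpace ℝ (Fin d) :=
      fun k h => gradient (ℓ k) (v t k h) with hgdef
    have hgk : ∀ k h, g k h = gradient (ℓ k) (v t k h) := fun _ _ => rfl
    set gb : ℕ → EuclideanSpace ℝ (Fin d) := fun h => m⁻¹ • ∑ k ∈ 𝓗, g k h with hgbdef
    have hgbk : ∀ h, gb h = m⁻¹ • ∑ k ∈ 𝓗, g k h := fun _ => rfl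
    set nb : EuclideanSpace ℝ (Fin d) := gradient lH x with hnbdef
    have hS0 : (0:ℝ) ≤ ‖nb‖^2 := sq_nonneg _
    have hG0 : (0:ℝ) ≤ G^2 := sq_nonneg _
    set D : ℕ → ℝ := fun h => m⁻¹ * ∑ k ∈ 𝓗, ‖v t k h - x‖^2 with hDdef
    have hDk : ∀ h, D h = m⁻¹ * ∑ k ∈ 𝓗, ‖v t k h - x‖^2 := fun _ => rfl
    have hD0 : ∀ h, 0 ≤ D h := fun h =>
      mul_nonneg (inv_nonneg.2 hm.le) (Finset.sum_nonneg fun k _ => sq_nonneg _)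
    clear_value x g gb nb D
    have hg0x : ∀ k ∈ 𝓗, g k 0 = gradient (ℓ k) x := by
      intro k hk; rw [hgk, hv0 t k hk, ← hx]
    have hgb0 : gb 0 = nb := by
      have e1 : nb = m⁻¹ • ∑ k ∈ 𝓗, gradient (ℓ k) x := by rw [hnbdef]; exact hgradH x
      rw [hgbk, e1]
      congr 1
      exact Finset.sum_congr rfl (fun k hk => hg0x k hk)
    have hpath : ∀ k ∈ 𝓗, ∀ h : ℕ,
        v t k h - x = -(γ • ∑ j ∈ Finset.range h, g k j) := by
      intro k hk h
      induction h with
      | zero => simp [hv0 t k hk, hx]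
      | succ h ih =>
        rw [hrec t k hk h, Finset.sum_range_succ, smul_add, neg_add, ← ih, ← hgk k h]
        abel
    have hLipk : ∀ k ∈ 𝓗, ∀ h : ℕ, ‖g k h - g k 0‖ ≤ L * ‖v t k h - x‖ := by
      intro k hk h
      have h1 := hsmooth k hk (v t k 0) (v t k h)
      rw [hgk k h, hgk k 0]
      calc ‖gradient (ℓ k) (v t k h) - gradient (ℓ k) (v t k 0)‖
          ≤ L * ‖v t k h - v t k 0‖ := h1
        _ = L * ‖v t k h - x‖ := by rw [hv0 t k hk, ← hx]
    have hLipk2 : ∀ k ∈ 𝓗, ∀ h : ℕ, ‖g k h - g k 0‖^2 ≤ L^2 * ‖v t k h - x‖^2 := by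
      intro k hk h
      have h1 := hLipk k hk h
      calc ‖g k h - g k 0‖^2 ≤ (L * ‖v t k h - x‖)^2 :=
            pow_le_pow_left₀ (norm_nonneg _) h1 2
        _ = L^2 * ‖v t k h - x‖^2 := by ring
    have hhet : m⁻¹ * ∑ k ∈ 𝓗, ‖g k 0 - nb‖^2 ≤ G^2 := by
      have h1 := hhetero x
      calc m⁻¹ * ∑ k ∈ 𝓗, ‖g k 0 - nb‖^2
          = m⁻¹ * ∑ k ∈ 𝓗, ‖gradient (ℓ k) x - gradient lH x‖^2 := by
            congr 1
            exact Finset.sum_congr rfl (fun k hk => by rw [hg0x k hk, hnbdef])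
        _ ≤ G^2 := h1
    -- average gradient norm bound
    have havg : ∀ h : ℕ, m⁻¹ * ∑ k ∈ 𝓗, ‖g k h‖^2
        ≤ 3*(L^2 * D h) + 3*G^2 + 3*‖nb‖^2 := by
      intro h
      have hpt : ∀ k ∈ 𝓗, ‖g k h‖^2
          ≤ 3*(L^2*‖v t k h - x‖^2) + 3*‖g k 0 - nb‖^2 + 3*‖nb‖^2 := by
        intro k hk
        have e1 : g k h = (g k h - g k 0) + (g k 0 - nb) + nb := by abel
        have e2 : ‖g k h‖^2 ≤ 3*(‖g k h - g k 0‖^2 + ‖g k 0 - nb‖^2 + ‖nb‖^2) := by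
          conv_lhs => rw [e1]
          exact aux_three_sq _ _ _
        linarith only [e2, hLipk2 k hk h]
      have hsum := Finset.sum_le_sum hpt
      have h2 : ∑ k ∈ 𝓗, (3*(L^2*‖v t k h - x‖^2) + 3*‖g k 0 - nb‖^2 + 3*‖nb‖^2)
          = 3*L^2*(∑ k ∈ 𝓗, ‖v t k h - x‖^2) + 3*(∑ k ∈ 𝓗, ‖g k 0 - nb‖^2)
            + 3*‖nb‖^2*m := by
        rw [Finset.sum_add_distrib, Finset.sum_add_distrib, Finset.sum_const,
          nsmul_eq_mul, ← Finset.mul_sum, ← Finset.mul_sum, ← Finset.mul_sum, hmdef]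
        ring
      have h3 : m⁻¹ * ∑ k ∈ 𝓗, ‖g k h‖^2
          ≤ m⁻¹ * (3*L^2*(∑ k ∈ 𝓗, ‖v t k h - x‖^2)
            + 3*(∑ k ∈ 𝓗, ‖g k 0 - nb‖^2) + 3*‖nb‖^2*m) := by
        apply mul_le_mul_of_nonneg_left _ (inv_nonneg.2 hm.le)
        rw [← h2]; exact hsum
      have h4 : m⁻¹ * (3*L^2*(∑ k ∈ 𝓗, ‖v t k h - x‖^2)
            + 3*(∑ k ∈ 𝓗, ‖g k 0 - nb‖^2) + 3*‖nb‖^2*m)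
          = 3*(L^2 * D h) + 3*(m⁻¹ * ∑ k ∈ 𝓗, ‖g k 0 - nb‖^2) + 3*‖nb‖^2 := by
        rw [hDk]
        linear_combination (3*‖nb‖^2) * him
      rw [h4] at h3
      linarith only [h3, hhet]
    -- deviation of average gradient
    have hdev : ∀ h : ℕ, ‖nb - gb h‖^2 ≤ L^2 * D h := by
      intro h
      have e1 : nb - gb h = m⁻¹ • ∑ k ∈ 𝓗, (g k 0 - g k h) := by
        rw [← hgb0, hgbk, hgbk, ← smul_sub, ← Finset.sum_sub_distrib]
      rw [e1, norm_smul, Real.norm_eq_abs, abs_of_nonneg (inv_nonneg.2 hm.le), mul_pow]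
      have e2 : ‖∑ k ∈ 𝓗, (g k 0 - g k h)‖^2 ≤ m * ∑ k ∈ 𝓗, ‖g k 0 - g k h‖^2 := by
        have := aux_norm_sum_sq_le 𝓗 (fun k => g k 0 - g k h)
        rw [← hmdef] at this
        exact this
      have e3 : ∑ k ∈ 𝓗, ‖g k 0 - g k h‖^2 ≤ ∑ k ∈ 𝓗, L^2*‖v t k h - x‖^2 := by
        apply Finset.sum_le_sum
        intro k hk
        calc ‖g k 0 - g k h‖^2 = ‖g k h - g k 0‖^2 := by rw [norm_sub_rev]
          _ ≤ L^2*‖v t k h - x‖^2 := hLipk2 k hk h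
      calc (m⁻¹)^2 * ‖∑ k ∈ 𝓗, (g k 0 - g k h)‖^2
          ≤ (m⁻¹)^2 * (m * ∑ k ∈ 𝓗, (L^2*‖v t k h - x‖^2)) := by
            apply mul_le_mul_of_nonneg_left _ (sq_nonneg _)
            exact le_trans e2 (mul_le_mul_of_nonneg_left e3 hm.le)
        _ = L^2 * D h := by
            rw [hDk, ← Finset.mul_sum]
            linear_combination (L^2 * (∑ k ∈ 𝓗, ‖v t k h - x‖^2) * m⁻¹) * him
    -- drift bound
    have hdrift : ∀ h : ℕ, h ≤ H → D h ≤ 4*γ^2*(H:ℝ)^2*(G^2+‖nb‖^2) := by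
      intro h
      induction h using Nat.strong_induction_on with
      | _ h ih =>
        intro hhH
        have hpt : ∀ k ∈ 𝓗, ‖v t k h - x‖^2
            ≤ γ^2 * ((h:ℝ) * ∑ j ∈ Finset.range h, ‖g k j‖^2) := by
          intro k hk
          rw [hpath k hk h, norm_neg, norm_smul, Real.norm_eq_abs,
            abs_of_nonneg hγpos.le, mul_pow]
          apply mul_le_mul_of_nonneg_left _ (by positivity)
          have := aux_norm_sum_sq_le (Finset.range h) (fun j => g k j)
          rwa [Finset.card_range] at this
        have h1 : D h ≤ m⁻¹ * ∑ k ∈ 𝓗, γ^2 * ((h:ℝ) * ∑ j ∈ Finset.range h, ‖g k j‖^2) := by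
          rw [hDk]
          exact mul_le_mul_of_nonneg_left (Finset.sum_le_sum hpt) (by positivity)
        have h2 : m⁻¹ * ∑ k ∈ 𝓗, γ^2 * ((h:ℝ) * ∑ j ∈ Finset.range h, ‖g k j‖^2)
            = γ^2 * (h:ℝ) * ∑ j ∈ Finset.range h, (m⁻¹ * ∑ k ∈ 𝓗, ‖g k j‖^2) := by
          simp only [Finset.mul_sum]
          rw [Finset.sum_comm]
          apply Finset.sum_congr rfl
          intro j _
          apply Finset.sum_congr rfl
          intro k _
          ring
        have hC0 : (0:ℝ) ≤ 3*(L^2 * (4*γ^2*(H:ℝ)^2*(G^2+‖nb‖^2))) + 3*G^2 + 3*‖nb‖^2 := by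
          positivity
        have h3 : ∑ j ∈ Finset.range h, (m⁻¹ * ∑ k ∈ 𝓗, ‖g k j‖^2)
            ≤ (h:ℝ) * (3*(L^2 * (4*γ^2*(H:ℝ)^2*(G^2+‖nb‖^2))) + 3*G^2 + 3*‖nb‖^2) := by
          have hterm : ∀ j ∈ Finset.range h, m⁻¹ * ∑ k ∈ 𝓗, ‖g k j‖^2
              ≤ 3*(L^2 * (4*γ^2*(H:ℝ)^2*(G^2+‖nb‖^2))) + 3*G^2 + 3*‖nb‖^2 := by
            intro j hj
            have hj' : j < h := Finset.mem_range.1 hj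
            have hDj := ih j hj' (le_trans (le_of_lt hj') hhH)
            have h5 := havg j
            have h6 : 3*(L^2 * D j) ≤ 3*(L^2 * (4*γ^2*(H:ℝ)^2*(G^2+‖nb‖^2))) := by
              nlinarith only [sq_nonneg L, hDj]
            linarith only [h5, h6]
          calc ∑ j ∈ Finset.range h, (m⁻¹ * ∑ k ∈ 𝓗, ‖g k j‖^2)
              ≤ ∑ _j ∈ Finset.range h, (3*(L^2 * (4*γ^2*(H:ℝ)^2*(G^2+‖nb‖^2)))
                + 3*G^2 + 3*‖nb‖^2) := Finset.sum_le_sum hterm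
            _ = (h:ℝ) * (3*(L^2 * (4*γ^2*(H:ℝ)^2*(G^2+‖nb‖^2))) + 3*G^2 + 3*‖nb‖^2) := by
                rw [Finset.sum_const, Finset.card_range, nsmul_eq_mul]
        have hh : (h:ℝ) ≤ (H:ℝ) := by exact_mod_cast hhH
        have hh0 : (0:ℝ) ≤ (h:ℝ) := Nat.cast_nonneg h
        have hstep1 : D h ≤ γ^2 * (h:ℝ) * ((h:ℝ) *
            (3*(L^2 * (4*γ^2*(H:ℝ)^2*(G^2+‖nb‖^2))) + 3*G^2 + 3*‖nb‖^2)) := by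
          rw [h2] at h1
          exact le_trans h1 (mul_le_mul_of_nonneg_left h3 (by positivity))
        have hstep2 : γ^2 * (h:ℝ) * ((h:ℝ) *
            (3*(L^2 * (4*γ^2*(H:ℝ)^2*(G^2+‖nb‖^2))) + 3*G^2 + 3*‖nb‖^2))
            ≤ γ^2 * (H:ℝ) * ((H:ℝ) *
            (3*(L^2 * (4*γ^2*(H:ℝ)^2*(G^2+‖nb‖^2))) + 3*G^2 + 3*‖nb‖^2)) := by
          have h9 : (h:ℝ)*(h:ℝ) ≤ (H:ℝ)*(H:ℝ) := mul_le_mul hh hh hh0 (le_trans hh0 hh)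
          have h10 := mul_le_mul_of_nonneg_right h9 hC0
          calc γ^2 * (h:ℝ) * ((h:ℝ) *
              (3*(L^2 * (4*γ^2*(H:ℝ)^2*(G^2+‖nb‖^2))) + 3*G^2 + 3*‖nb‖^2))
              = γ^2 * ((h:ℝ)*(h:ℝ) *
              (3*(L^2 * (4*γ^2*(H:ℝ)^2*(G^2+‖nb‖^2))) + 3*G^2 + 3*‖nb‖^2)) := by ring
            _ ≤ γ^2 * ((H:ℝ)*(H:ℝ) *
              (3*(L^2 * (4*γ^2*(H:ℝ)^2*(G^2+‖nb‖^2))) + 3*G^2 + 3*‖nb‖^2)) :=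
                mul_le_mul_of_nonneg_left h10 (sq_nonneg γ)
            _ = γ^2 * (H:ℝ) * ((H:ℝ) *
              (3*(L^2 * (4*γ^2*(H:ℝ)^2*(G^2+‖nb‖^2))) + 3*G^2 + 3*‖nb‖^2)) := by ring
        have hC4 : (3*(L^2 * (4*γ^2*(H:ℝ)^2*(G^2+‖nb‖^2))) + 3*G^2 + 3*‖nb‖^2)
            ≤ 4*(G^2+‖nb‖^2) := by
          have e : L^2 * (4*γ^2*(H:ℝ)^2*(G^2+‖nb‖^2)) = 4*(α^2*(G^2+‖nb‖^2)) := by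
            rw [hα]; ring
          rw [e]
          linarith only [mul_le_mul_of_nonneg_right h32' (add_nonneg hG0 hS0),
            mul_nonneg (sq_nonneg α) (add_nonneg hG0 hS0)]
        have hstep3 : γ^2 * (H:ℝ) * ((H:ℝ) *
            (3*(L^2 * (4*γ^2*(H:ℝ)^2*(G^2+‖nb‖^2))) + 3*G^2 + 3*‖nb‖^2))
            ≤ 4*γ^2*(H:ℝ)^2*(G^2+‖nb‖^2) := by
          have h7 : (H:ℝ) * (3*(L^2 * (4*γ^2*(H:ℝ)^2*(G^2+‖nb‖^2))) + 3*G^2 + 3*‖nb‖^2)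
              ≤ (H:ℝ) * (4*(G^2+‖nb‖^2)) := mul_le_mul_of_nonneg_left hC4 hHpos.le
          have h8 : γ^2 * (H:ℝ) * ((H:ℝ) * (3*(L^2 * (4*γ^2*(H:ℝ)^2*(G^2+‖nb‖^2)))
              + 3*G^2 + 3*‖nb‖^2)) ≤ γ^2 * (H:ℝ) * ((H:ℝ) * (4*(G^2+‖nb‖^2))) :=
            mul_le_mul_of_nonneg_left h7 (by positivity)
          calc _ ≤ γ^2 * (H:ℝ) * ((H:ℝ) * (4*(G^2+‖nb‖^2))) := h8
            _ = 4*γ^2*(H:ℝ)^2*(G^2+‖nb‖^2) := by ring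
        linarith only [hstep1, hstep2, hstep3]
    -- variance bound
    have hVh : ∀ h : ℕ, m⁻¹ * ∑ k ∈ 𝓗, ‖g k h - gb h‖^2
        ≤ 6*(L^2*D h) + 3*G^2 := by
      intro h
      have hpt : ∀ k ∈ 𝓗, ‖g k h - gb h‖^2
          ≤ 3*(L^2*‖v t k h - x‖^2) + 3*‖g k 0 - nb‖^2 + 3*‖nb - gb h‖^2 := by
        intro k hk
        have e1 : g k h - gb h = (g k h - g k 0) + (g k 0 - nb) + (nb - gb h) := by abel
        have e2 : ‖g k h - gb h‖^2
            ≤ 3*(‖g k h - g k 0‖^2 + ‖g k 0 - nb‖^2 + ‖nb - gb h‖^2) := by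
          conv_lhs => rw [e1]
          exact aux_three_sq _ _ _
        linarith only [e2, hLipk2 k hk h]
      have hsum := Finset.sum_le_sum hpt
      have h2 : ∑ k ∈ 𝓗, (3*(L^2*‖v t k h - x‖^2) + 3*‖g k 0 - nb‖^2 + 3*‖nb - gb h‖^2)
          = 3*L^2*(∑ k ∈ 𝓗, ‖v t k h - x‖^2) + 3*(∑ k ∈ 𝓗, ‖g k 0 - nb‖^2)
            + 3*‖nb - gb h‖^2*m := by
        rw [Finset.sum_add_distrib, Finset.sum_add_distrib, Finset.sum_const,
          nsmul_eq_mul, ← Finset.mul_sum, ← Finset.mul_sum, ← Finset.mul_sum, hmdef]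
        ring
      have h3 : m⁻¹ * ∑ k ∈ 𝓗, ‖g k h - gb h‖^2
          ≤ m⁻¹ * (3*L^2*(∑ k ∈ 𝓗, ‖v t k h - x‖^2)
            + 3*(∑ k ∈ 𝓗, ‖g k 0 - nb‖^2) + 3*‖nb - gb h‖^2*m) := by
        apply mul_le_mul_of_nonneg_left _ (inv_nonneg.2 hm.le)
        rw [← h2]; exact hsum
      have h4 : m⁻¹ * (3*L^2*(∑ k ∈ 𝓗, ‖v t k h - x‖^2)
            + 3*(∑ k ∈ 𝓗, ‖g k 0 - nb‖^2) + 3*‖nb - gb h‖^2*m)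
          = 3*(L^2 * D h) + 3*(m⁻¹ * ∑ k ∈ 𝓗, ‖g k 0 - nb‖^2) + 3*‖nb - gb h‖^2 := by
        rw [hDk]
        linear_combination (3*‖nb - gb h‖^2) * him
      rw [h4] at h3
      linarith only [h3, hhet, hdev h]
    -- the aggregated update
    set ub : EuclideanSpace ℝ (Fin d) := m⁻¹ • ∑ k ∈ 𝓗, (u t k - x) with hubdef
    have hub : ub = -(γ • ∑ h ∈ Finset.range H, gb h) := by
      have e1 : ∑ k ∈ 𝓗, (u t k - x)
          = -(γ • ∑ h ∈ Finset.range H, ∑ k ∈ 𝓗, g k h) := by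
        calc ∑ k ∈ 𝓗, (u t k - x)
            = ∑ k ∈ 𝓗, -(γ • ∑ h ∈ Finset.range H, g k h) := by
              apply Finset.sum_congr rfl
              intro k hk
              rw [show u t k - x = v t k H - x by rw [hu t k hk]]
              exact hpath k hk H
          _ = -(γ • ∑ k ∈ 𝓗, ∑ h ∈ Finset.range H, g k h) := by
              rw [Finset.sum_neg_distrib, Finset.smul_sum]
          _ = -(γ • ∑ h ∈ Finset.range H, ∑ k ∈ 𝓗, g k h) := by rw [Finset.sum_comm]
      rw [hubdef, e1, smul_neg, smul_comm m⁻¹ γ, Finset.smul_sum]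
      congr 1
      congr 1
      exact Finset.sum_congr rfl (fun h _ => (hgbk h).symm)
    set eE : EuclideanSpace ℝ (Fin d) := A (fun k => u t k - x) - ub with heE
    clear_value ub eE
    have hwt1 : w (t+1) = x + (ub + eE) := by
      have e1 : ub + eE = A (fun k => u t k - x) := by rw [heE]; abel
      rw [hw t, ← hx, e1]
    have hrob : ‖eE‖^2 ≤ κ / m * ∑ k ∈ 𝓗, ‖(u t k - x) - ub‖^2 := by
      have h1 := hA (fun k => u t k - x) 𝓗 h𝓗
      simp only at h1
      rw [← hmdef, ← hubdef, ← heE] at h1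
      exact h1
    have hdevk : ∀ k ∈ 𝓗, ‖(u t k - x) - ub‖^2
        ≤ γ^2 * ((H:ℝ) * ∑ h ∈ Finset.range H, ‖g k h - gb h‖^2) := by
      intro k hk
      have e2 : u t k - x = -(γ • ∑ h ∈ Finset.range H, g k h) := by
        rw [show u t k - x = v t k H - x by rw [hu t k hk]]
        exact hpath k hk H
      have e1 : (u t k - x) - ub = -(γ • ∑ h ∈ Finset.range H, (g k h - gb h)) := by
        rw [e2, hub, Finset.sum_sub_distrib, smul_sub]
        abel
      rw [e1, norm_neg, norm_smul, Real.norm_eq_abs, abs_of_nonneg hγpos.le, mul_pow]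
      apply mul_le_mul_of_nonneg_left _ (by positivity)
      have := aux_norm_sum_sq_le (Finset.range H) (fun h => g k h - gb h)
      rwa [Finset.card_range] at this
    have he2 : ‖eE‖^2 ≤ κ*γ^2*(H:ℝ)^2*(24*(α^2*(G^2+‖nb‖^2)) + 3*G^2) := by
      have h1 : ∑ k ∈ 𝓗, ‖(u t k - x) - ub‖^2
          ≤ γ^2*(H:ℝ) * ∑ k ∈ 𝓗, ∑ h ∈ Finset.range H, ‖g k h - gb h‖^2 := by
        calc ∑ k ∈ 𝓗, ‖(u t k - x) - ub‖^2
            ≤ ∑ k ∈ 𝓗, γ^2 * ((H:ℝ) * ∑ h ∈ Finset.range H, ‖g k h - gb h‖^2) :=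
              Finset.sum_le_sum hdevk
          _ = γ^2*(H:ℝ) * ∑ k ∈ 𝓗, ∑ h ∈ Finset.range H, ‖g k h - gb h‖^2 := by
              rw [← Finset.mul_sum, ← Finset.mul_sum]
              ring
      have h2 : ∑ k ∈ 𝓗, ∑ h ∈ Finset.range H, ‖g k h - gb h‖^2
          = ∑ h ∈ Finset.range H, ∑ k ∈ 𝓗, ‖g k h - gb h‖^2 := Finset.sum_comm
      have h3 : ∀ h ∈ Finset.range H, ∑ k ∈ 𝓗, ‖g k h - gb h‖^2
          ≤ m * (6*(L^2*(4*γ^2*(H:ℝ)^2*(G^2+‖nb‖^2))) + 3*G^2) := by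
        intro h hh
        have hV := hVh h
        have hD := hdrift h (le_of_lt (Finset.mem_range.1 hh))
        have e : ∑ k ∈ 𝓗, ‖g k h - gb h‖^2
            = m * (m⁻¹ * ∑ k ∈ 𝓗, ‖g k h - gb h‖^2) := by
          rw [← mul_assoc, mul_inv_cancel₀ hm.ne', one_mul]
        rw [e]
        apply mul_le_mul_of_nonneg_left _ hm.le
        have h6 : 6*(L^2 * D h) ≤ 6*(L^2*(4*γ^2*(H:ℝ)^2*(G^2+‖nb‖^2))) := by
          nlinarith only [sq_nonneg L, hD]
        linarith only [hV, h6]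
      have h4 : ∑ h ∈ Finset.range H, ∑ k ∈ 𝓗, ‖g k h - gb h‖^2
          ≤ (H:ℝ) * (m * (6*(L^2*(4*γ^2*(H:ℝ)^2*(G^2+‖nb‖^2))) + 3*G^2)) := by
        calc ∑ h ∈ Finset.range H, ∑ k ∈ 𝓗, ‖g k h - gb h‖^2
            ≤ ∑ _h ∈ Finset.range H,
              (m * (6*(L^2*(4*γ^2*(H:ℝ)^2*(G^2+‖nb‖^2))) + 3*G^2)) :=
              Finset.sum_le_sum h3
          _ = (H:ℝ) * (m * (6*(L^2*(4*γ^2*(H:ℝ)^2*(G^2+‖nb‖^2))) + 3*G^2)) := by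
              rw [Finset.sum_const, Finset.card_range, nsmul_eq_mul]
      have h5 : ‖eE‖^2 ≤ κ / m * (γ^2*(H:ℝ) *
          ((H:ℝ) * (m * (6*(L^2*(4*γ^2*(H:ℝ)^2*(G^2+‖nb‖^2))) + 3*G^2)))) := by
        apply le_trans hrob
        apply mul_le_mul_of_nonneg_left _ (div_nonneg hκ hm.le)
        apply le_trans h1
        rw [h2]
        exact mul_le_mul_of_nonneg_left h4 (by positivity)
      calc ‖eE‖^2 ≤ _ := h5
        _ = κ*γ^2*(H:ℝ)^2*(24*(α^2*(G^2+‖nb‖^2)) + 3*G^2) := by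
          rw [hα, div_eq_mul_inv]
          linear_combination (κ*γ^2*(H:ℝ)^2*(6*(L^2*(4*γ^2*(H:ℝ)^2*(G^2+‖nb‖^2)))
            + 3*G^2)) * him
    -- inner products and norms for the descent step
    set P : ℝ := ∑ h ∈ Finset.range H, ‖gb h‖^2 with hPdef
    set Q : ℝ := ∑ h ∈ Finset.range H, ‖nb - gb h‖^2 with hQdef
    clear_value P Q
    have hPnn : 0 ≤ P := hPdef ▸ Finset.sum_nonneg (fun h _ => sq_nonneg _)
    have hQb : Q ≤ (H:ℝ) * (L^2*(4*γ^2*(H:ℝ)^2*(G^2+‖nb‖^2))) := by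
      rw [hQdef]
      calc ∑ h ∈ Finset.range H, ‖nb - gb h‖^2
          ≤ ∑ _h ∈ Finset.range H, (L^2*(4*γ^2*(H:ℝ)^2*(G^2+‖nb‖^2))) := by
            apply Finset.sum_le_sum
            intro h hh
            calc ‖nb - gb h‖^2 ≤ L^2 * D h := hdev h
              _ ≤ L^2*(4*γ^2*(H:ℝ)^2*(G^2+‖nb‖^2)) := by
                  nlinarith only [sq_nonneg L, hdrift h (le_of_lt (Finset.mem_range.1 hh))]
        _ = (H:ℝ) * (L^2*(4*γ^2*(H:ℝ)^2*(G^2+‖nb‖^2))) := by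
            rw [Finset.sum_const, Finset.card_range, nsmul_eq_mul]
    have hinner_ub : ⟪nb, ub⟫ = -(γ/2) * ((H:ℝ)*‖nb‖^2 + P - Q) := by
      rw [hub, inner_neg_right, real_inner_smul_right, inner_sum]
      have e1 : ∀ h, ⟪nb, gb h⟫ = (‖nb‖^2 + ‖gb h‖^2 - ‖nb - gb h‖^2)/2 := by
        intro h
        have h7 := norm_sub_sq_real nb (gb h)
        linarith only [h7]
      rw [Finset.sum_congr rfl (fun h _ => e1 h)]
      rw [← Finset.sum_div, Finset.sum_sub_distrib, Finset.sum_add_distrib,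
        Finset.sum_const, Finset.card_range, nsmul_eq_mul, ← hPdef, ← hQdef]
      ring
    have hnorm_ub : ‖ub‖^2 ≤ γ^2*(H:ℝ)*P := by
      rw [hub, norm_neg, norm_smul, Real.norm_eq_abs, abs_of_nonneg hγpos.le, mul_pow]
      have h1 := aux_norm_sum_sq_le (Finset.range H) gb
      rw [Finset.card_range, ← hPdef] at h1
      calc γ^2 * ‖∑ h ∈ Finset.range H, gb h‖^2 ≤ γ^2 * ((H:ℝ) * P) :=
            mul_le_mul_of_nonneg_left h1 (sq_nonneg γ)
        _ = γ^2*(H:ℝ)*P := by ring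
    have hγH : (0:ℝ) < γ*(H:ℝ) := by positivity
    have hinner_e : ⟪nb, eE⟫ ≤ γ*(H:ℝ)/4 * ‖nb‖^2 + (γ*(H:ℝ))⁻¹ * ‖eE‖^2 := by
      have h1 : ⟪nb, eE⟫ ≤ ‖nb‖ * ‖eE‖ := real_inner_le_norm _ _
      have e : γ*(H:ℝ)/4 * ‖nb‖^2 + (γ*(H:ℝ))⁻¹ * ‖eE‖^2 - ‖nb‖*‖eE‖
          = (γ*(H:ℝ))⁻¹ * ((γ*(H:ℝ)*‖nb‖/2 - ‖eE‖)^2) := by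
        field_simp
        ring
      linarith only [h1, e, mul_nonneg (inv_nonneg.2 hγH.le)
        (sq_nonneg (γ*(H:ℝ)*‖nb‖/2 - ‖eE‖))]
    have hdescent : lH (w (t+1)) ≤ lH x + ⟪nb, ub⟫ + ⟪nb, eE⟫
        + L/2*(2*‖ub‖^2 + 2*‖eE‖^2) := by
      have h1 := hdesc x (w (t+1))
      rw [← hnbdef] at h1
      rw [hwt1, add_sub_cancel_left] at h1
      rw [inner_add_right] at h1
      have h2 : ‖ub + eE‖^2 ≤ 2*‖ub‖^2 + 2*‖eE‖^2 := aux_two_sq _ _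
      have h3 : L/2*‖ub+eE‖^2 ≤ L/2*(2*‖ub‖^2 + 2*‖eE‖^2) :=
        mul_le_mul_of_nonneg_left h2 (by positivity)
      calc lH (w (t+1)) ≤ lH x + (⟪nb, ub⟫ + ⟪nb, eE⟫) + L/2*‖ub + eE‖^2 := by
            rw [hwt1]; exact h1
        _ ≤ lH x + ⟪nb, ub⟫ + ⟪nb, eE⟫ + L/2*(2*‖ub‖^2 + 2*‖eE‖^2) := by
            linarith only [h3]
    -- collect terms
    have hQ2 : γ/2*Q ≤ γ*(H:ℝ)*(2*(α^2*(G^2+‖nb‖^2))) := by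
      calc γ/2*Q ≤ γ/2*((H:ℝ)*(L^2*(4*γ^2*(H:ℝ)^2*(G^2+‖nb‖^2)))) :=
            mul_le_mul_of_nonneg_left hQb (by positivity)
        _ = γ*(H:ℝ)*(2*((γ*L*(H:ℝ))^2*(G^2+‖nb‖^2))) := by ring
        _ = γ*(H:ℝ)*(2*(α^2*(G^2+‖nb‖^2))) := by rw [← hα]
    have hLP : L*‖ub‖^2 ≤ γ/2*P := by
      calc L*‖ub‖^2 ≤ L*(γ^2*(H:ℝ)*P) := mul_le_mul_of_nonneg_left hnorm_ub hL.le
        _ = (L*γ*(H:ℝ))*(γ*P) := by ring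
        _ ≤ 1/2*(γ*P) := mul_le_mul_of_nonneg_right hLγH (mul_nonneg hγpos.le hPnn)
        _ = γ/2*P := by ring
    have hE3 : (γ*(H:ℝ))⁻¹ * ‖eE‖^2 + L*‖eE‖^2
        ≤ γ*(H:ℝ)*((1+α)*(κ*(24*(α^2*(G^2+‖nb‖^2)) + 3*G^2))) := by
      have hcoef : (0:ℝ) ≤ (γ*(H:ℝ))⁻¹ + L := by positivity
      have h1 : ((γ*(H:ℝ))⁻¹ + L)*‖eE‖^2
          ≤ ((γ*(H:ℝ))⁻¹ + L)*(κ*γ^2*(H:ℝ)^2*(24*(α^2*(G^2+‖nb‖^2)) + 3*G^2)) :=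
        mul_le_mul_of_nonneg_left he2 hcoef
      have h2 : ((γ*(H:ℝ))⁻¹ + L)*(κ*γ^2*(H:ℝ)^2*(24*(α^2*(G^2+‖nb‖^2)) + 3*G^2))
          = γ*(H:ℝ)*((1+α)*(κ*(24*(α^2*(G^2+‖nb‖^2)) + 3*G^2))) := by
        rw [hα]
        field_simp
      rw [h2] at h1
      linarith only [h1]
    have hmain : lH (w (t+1)) ≤ lH x + γ*(H:ℝ)*(-‖nb‖^2/4
        + 2*(α^2*(G^2+‖nb‖^2)) + (1+α)*(κ*(24*(α^2*(G^2+‖nb‖^2)) + 3*G^2))) := by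
      linarith only [hdescent, hinner_ub, hinner_e, hLP, hQ2, hE3]
    have hscalar : -‖nb‖^2/4 + 2*(α^2*(G^2+‖nb‖^2))
        + (1+α)*(κ*(24*(α^2*(G^2+‖nb‖^2)) + 3*G^2))
        ≤ -‖nb‖^2/16 + (G^2/(16*τ^2) + 45/8*(κ*G^2)) := by
      have hG16 : 2*(α^2*G^2) ≤ G^2/(16*τ^2) := by
        rw [le_div_iff₀ (by positivity)]
        nlinarith only [mul_le_mul_of_nonneg_right h32α hG0]
      have hA1 : 2*(α^2*‖nb‖^2) ≤ ‖nb‖^2/16 := by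
        linarith only [mul_le_mul_of_nonneg_right h32' hS0]
      have hA3 : (1+α)*(κ*(24*(α^2*‖nb‖^2))) ≤ ‖nb‖^2/8 := by
        have p1 := mul_le_mul_of_nonneg_right hκabs hS0
        have p2 := mul_le_mul_of_nonneg_right hα14
          (mul_nonneg (mul_nonneg hκ (sq_nonneg α)) hS0)
        linarith only [p1, p2, hS0]
      have hA4 : (1+α)*(κ*(24*(α^2*G^2) + 3*G^2)) ≤ 45/8*(κ*G^2) := by
        have p1 := mul_le_mul_of_nonneg_right h32' (mul_nonneg hκ hG0)
        have p2 := mul_le_mul_of_nonneg_right hα14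
          (mul_nonneg (mul_nonneg hκ (sq_nonneg α)) hG0)
        have p3 := mul_le_mul_of_nonneg_right hα14 (mul_nonneg hκ hG0)
        linarith only [p1, p2, p3, hG0,
          mul_nonneg (mul_nonneg hκ (sq_nonneg α)) hG0, mul_nonneg hκ hG0]
      linarith only [hG16, hA1, hA3, hA4]
    have hfinal : lH (w (t+1)) ≤ lH x - γ*(H:ℝ)/16*‖nb‖^2 + ε := by
      have h1 : γ*(H:ℝ)*(-‖nb‖^2/4 + 2*(α^2*(G^2+‖nb‖^2))
          + (1+α)*(κ*(24*(α^2*(G^2+‖nb‖^2)) + 3*G^2)))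
          ≤ γ*(H:ℝ)*(-‖nb‖^2/16 + (G^2/(16*τ^2) + 45/8*(κ*G^2))) :=
        mul_le_mul_of_nonneg_left hscalar hγH.le
      have h2 : γ*(H:ℝ)*(-‖nb‖^2/16 + (G^2/(16*τ^2) + 45/8*(κ*G^2)))
          = -(γ*(H:ℝ)/16*‖nb‖^2) + ε := by
        rw [hε]; ring
      linarith only [hmain, h1, h2.le, h2.ge]
    -- apply PL
    have hPLx : lH x - lstar ≤ 1/(2*μ) * ‖nb‖^2 := by
      have := hPL x
      rw [← hnbdef] at this
      exact this
    have haeq : a*(1/(2*μ)) = γ*(H:ℝ)/16 := by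
      rw [ha]; field_simp; ring
    have hPL2 : a * (lH x - lstar) ≤ γ*(H:ℝ)/16 * ‖nb‖^2 := by
      calc a * (lH x - lstar) ≤ a * (1/(2*μ) * ‖nb‖^2) :=
            mul_le_mul_of_nonneg_left hPLx ha0.le
        _ = (a*(1/(2*μ))) * ‖nb‖^2 := by ring
        _ = γ*(H:ℝ)/16 * ‖nb‖^2 := by rw [haeq]
    linarith only [hfinal, hPL2]
  -- recursion
  have ha1 : a ≤ 1 := by
    have h1 : a * (8 * L) = μ * α := by rw [ha, hα]; ring
    have p1 := mul_le_mul_of_nonneg_right hμL hαpos.le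
    have p2 := mul_le_mul_of_nonneg_left hα14 hL.le
    nlinarith only [h1, p1, p2, hL]
  have hεnn : 0 ≤ ε := by
    have : (0:ℝ) ≤ G^2 / (16 * τ^2) := by positivity
    have : (0:ℝ) ≤ 45/8 * (κ * G^2) := by positivity
    rw [hε]; positivity
  have hrecT : lH (w T) - lstar ≤ (1 - a) ^ T * (lH (w 0) - lstar) + ε / a :=
    aux_recursion (fun t => lH (w t) - lstar) a ε ha0 ha1 hεnn hround T
  -- exponential bound
  have hτT : τ * (T:ℝ)^β = (T:ℝ) := by
    rw [hτ, ← Real.rpow_add hTpos, show (1:ℝ) - β + β = 1 by ring, Real.rpow_one]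
  have h1a : (1 - a) ^ T ≤ Real.exp (-(μ * (T:ℝ)^β) / (8 * c' * L)) := by
    have h1 : 1 - a ≤ Real.exp (-a) := by
      have h0 := Real.add_one_le_exp (-a); linarith only [h0]
    have h2 : (1 - a) ^ T ≤ Real.exp (-a) ^ T :=
      pow_le_pow_left₀ (by linarith only [ha1]) h1 T
    have h3 : Real.exp (-a) ^ T = Real.exp ((T:ℝ) * (-a)) := (Real.exp_nat_mul _ T).symm
    have h4 : (T:ℝ) * (-a) = -(μ * (T:ℝ)^β) / (8 * c' * L) := by
      have h8 : (8:ℝ) * c' * L ≠ 0 := by positivity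
      rw [ha]
      rw [eq_div_iff h8]
      linear_combination (μ * γ * (H:ℝ) * c' * L) * hτT - (μ * (T:ℝ)^β) * hγ'
    rw [h3, h4] at h2
    exact h2
  -- epsilon over a
  have hτsq : τ^2 = (T:ℝ) ^ ((2:ℝ) - 2*β) := by
    rw [hτ, ← Real.rpow_natCast ((T:ℝ) ^ ((1:ℝ) - β)) 2, ← Real.rpow_mul hTpos.le]
    congr 1
    push_cast
    ring
  have hεa : ε / a = G^2 / (2 * μ * (T:ℝ) ^ ((2:ℝ) - 2*β)) + 45 * κ * G^2 / μ := by
    rw [← hτsq, hε, ha]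
    field_simp
    ring
  have hδ0 : 0 ≤ lH (w 0) - lstar := sub_nonneg.2 (hstar _)
  calc lH (w T) - lstar ≤ (1 - a) ^ T * (lH (w 0) - lstar) + ε / a := hrecT
    _ ≤ Real.exp (-(μ * (T:ℝ)^β) / (8 * c' * L)) * (lH (w 0) - lstar) + ε / a :=
        add_le_add_left (mul_le_mul_of_nonneg_right h1a hδ0) _
    _ = _ := by rw [hεa]; ring
end
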